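/- arXiv:2411.03104 — 9 statements merged into one kernel-verified Lean document; each statement's English description precedes it below -/
import Mathlib

section
/- The function s ↦ s · exp((1/(2β²)) ∫₀^s γ̃(v) dv) is integrable on (0,∞); in particular δ = ∫₀^∞ s · exp((1/(2β²)) ∫₀^s γ̃(v) dv) ds is finite, and for every r ≥ 0 the value f(r) is finite. -/
open MeasureTheory Set

set_option maxHeartbeats 1000000 in
/-- The function `s ↦ s · exp((1/(2β²)) ∫₀^s γ̃(v) dv)` is integrable on `(0,∞)`;
in particular `δ` is finite (the integrand is integrable on `(u,∞)` for every `u ≥ 0`), and for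
every `r ≥ 0` the value `f(r)` is finite (the outer integrand is interval integrable on `[0,r]`). -/
theorem stmt0 (β K₁ Kσ K₂ R : ℝ) (hβ : β ≠ 0) (hK₁ : 0 ≤ K₁) (hKσ : 0 < Kσ)
    (hK₂ : Kσ < K₂) (hR : 0 < R)
    (γ γt g : ℝ → ℝ)
    (hγ : ∀ r, γ r = if r ≤ R then K₁ * r
      else if r ≤ 2 * R then (-((K₁ + K₂) / R) * (r - R) + K₁) * r
      else -K₂ * r)
    (hγt : ∀ v, γt v = γ v + Kσ * v)
    (hg : ∀ s, g s = s * Real.exp ((1 / (2 * β ^ 2)) * ∫ v in (0 : ℝ)..s, γt v)) :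
    IntegrableOn g (Ioi (0 : ℝ)) volume ∧
    (∀ u : ℝ, 0 ≤ u → IntegrableOn g (Ioi u) volume) ∧
    (∀ r : ℝ, 0 ≤ r →
      IntervalIntegrable
        (fun u => Real.exp (-(1 / (2 * β ^ 2)) * ∫ v in (0 : ℝ)..u, γt v) *
          ∫ s in Ioi u, g s) volume 0 r) := by
  have hc₀pos : 0 < 1 / (2 * β ^ 2) := by positivity
  set c₀ : ℝ := 1 / (2 * β ^ 2) with hc₀
  have hRne : R ≠ 0 := ne_of_gt hR
  -- continuity of γ
  have hγcont : Continuous γ := by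
    have h1 : Continuous fun r : ℝ => if r ≤ R then K₁ * r
        else if r ≤ 2 * R then (-((K₁ + K₂) / R) * (r - R) + K₁) * r else -K₂ * r := by
      apply Continuous.if_le (continuous_const.mul continuous_id)
        (Continuous.if_le
          (((continuous_const.mul (continuous_id.sub continuous_const)).add
            continuous_const).mul continuous_id)
          (continuous_const.mul continuous_id) continuous_id continuous_const ?_)
        continuous_id continuous_const ?_
      · intro x hx; subst hx; simp only [Pi.mul_apply, Pi.add_apply, Pi.sub_apply, Pi.neg_apply, id_eq]
        have hd : (K₁ + K₂) / R * R = K₁ + K₂ := div_mul_cancel₀ _ hRne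
        linear_combination (-(2 * R)) * hd
      · intro x hx
        rw [hx, if_pos (by linarith : R ≤ 2 * R)]
        simp only [Pi.mul_apply, Pi.add_apply, Pi.sub_apply, Pi.neg_apply, id_eq]
        simp only [id_eq] at hx; rw [hx]
        ring
    have : γ = fun r : ℝ => if r ≤ R then K₁ * r
        else if r ≤ 2 * R then (-((K₁ + K₂) / R) * (r - R) + K₁) * r else -K₂ * r :=
      funext hγ
    rw [this]; exact h1
  have hγtcont : Continuous γt := by
    have : γt = fun v => γ v + Kσ * v := funext hγt
    rw [this]; exact hγcont.add (continuous_const.mul continuous_id)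
  have hγtInt : ∀ a b : ℝ, IntervalIntegrable γt volume a b :=
    fun a b => hγtcont.intervalIntegrable a b
  have hFcont : Continuous fun s : ℝ => ∫ v in (0 : ℝ)..s, γt v :=
    intervalIntegral.continuous_primitive hγtInt 0
  have hgfun : g = fun s => s * Real.exp (c₀ * ∫ v in (0 : ℝ)..s, γt v) := funext hg
  have hgcont : Continuous g := by
    rw [hgfun]
    exact continuous_id.mul (Real.continuous_exp.comp (continuous_const.mul hFcont))
  -- formula for F on [2R, ∞)
  have hKd : 0 < K₂ - Kσ := by linarith
  set b : ℝ := c₀ * (K₂ - Kσ) / 2 with hbdef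
  have hbpos : 0 < b := by positivity
  set A : ℝ := c₀ * (∫ v in (0 : ℝ)..(2 * R), γt v) + b * (2 * R) ^ 2 with hAdef
  have hF : ∀ s : ℝ, 2 * R ≤ s →
      c₀ * (∫ v in (0 : ℝ)..s, γt v) = A - b * s ^ 2 := by
    intro s hs
    have hsplit := intervalIntegral.integral_add_adjacent_intervals
      (hγtInt 0 (2 * R)) (hγtInt (2 * R) s)
    have h2 : ∫ v in (2 * R)..s, γt v = ∫ v in (2 * R)..s, -(K₂ - Kσ) * v := by
      apply intervalIntegral.integral_congr
      intro v hv
      rw [uIcc_of_le hs] at hv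
      rw [hγt, hγ]
      by_cases hv2 : v ≤ 2 * R
      · have hv2R : v = 2 * R := le_antisymm hv2 hv.1
        subst hv2R
        rw [if_neg (by linarith), if_pos le_rfl]
        field_simp
        ring
      · rw [if_neg (by push_neg at hv2; linarith), if_neg hv2]
        ring
    have h3 : ∫ v in (2 * R)..s, -(K₂ - Kσ) * v = -(K₂ - Kσ) * ((s ^ 2 - (2 * R) ^ 2) / 2) := by
      rw [intervalIntegral.integral_const_mul, integral_id]
    rw [← hsplit, h2, h3, hAdef, hbdef]
    ring
  clear_value A b
  -- integrability on Ioi (2R)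
  have hIoi2R : IntegrableOn g (Ioi (2 * R)) volume := by
    have hI : Integrable (fun s : ℝ => Real.exp A * (s * Real.exp (-b * s ^ 2))) volume :=
      (integrable_mul_exp_neg_mul_sq hbpos).const_mul _
    apply (hI.integrableOn).congr_fun _ measurableSet_Ioi
    intro s hs
    have hs' : 2 * R ≤ s := le_of_lt hs
    rw [hgfun]
    simp only
    have harg : c₀ * ∫ v in (0 : ℝ)..s, γt v = A + -(b * s ^ 2) := by
      rw [hF s hs']; ring
    rw [harg, Real.exp_add, neg_mul]
    ring
  have hIoc : IntegrableOn g (Ioc 0 (2 * R)) volume :=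
    (hgcont.continuousOn).integrableOn_compact isCompact_Icc |>.mono_set Ioc_subset_Icc_self
  have hIoi0 : IntegrableOn g (Ioi (0 : ℝ)) volume := by
    have := hIoc.union hIoi2R
    rwa [Ioc_union_Ioi_eq_Ioi (by linarith : (0 : ℝ) ≤ 2 * R)] at this
  refine ⟨hIoi0, fun u hu => hIoi0.mono_set (Ioi_subset_Ioi hu), ?_⟩
  -- part 3
  set δ : ℝ := ∫ s in Ioi (0 : ℝ), g s with hδ
  have key : ∀ u : ℝ, 0 ≤ u → ∫ s in Ioi u, g s = δ - ∫ s in (0 : ℝ)..u, g s := by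
    intro u hu
    have hsplit : ∫ s in Ioi (0 : ℝ), g s
        = (∫ s in Ioc 0 u, g s) + ∫ s in Ioi u, g s := by
      rw [← setIntegral_union (Ioc_disjoint_Ioi le_rfl) measurableSet_Ioi
        (hIoi0.mono_set Ioc_subset_Ioi_self) (hIoi0.mono_set (Ioi_subset_Ioi hu)),
        Ioc_union_Ioi_eq_Ioi hu]
    rw [intervalIntegral.integral_of_le hu]
    rw [hδ, hsplit]
    ring
  intro r hr
  have hφcont : Continuous fun u : ℝ =>
      Real.exp (-c₀ * ∫ v in (0 : ℝ)..u, γt v) * (δ - ∫ s in (0 : ℝ)..u, g s) := by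
    apply Continuous.mul
    · exact Real.continuous_exp.comp (continuous_const.mul hFcont)
    · exact continuous_const.sub
        (intervalIntegral.continuous_primitive (fun a b => hgcont.intervalIntegrable a b) 0)
  have heq : EqOn
      (fun u => Real.exp (-c₀ * ∫ v in (0 : ℝ)..u, γt v) * ∫ s in Ioi u, g s)
      (fun u : ℝ => Real.exp (-c₀ * ∫ v in (0 : ℝ)..u, γt v) * (δ - ∫ s in (0 : ℝ)..u, g s))
      (uIcc 0 r) := by
    intro u hu
    rw [uIcc_of_le hr] at hu
    simp only
    rw [key u hu.1]
  exact ((hφcont.continuousOn).congr heq).intervalIntegrable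
end

section
/- The function f is twice continuously differentiable on [0,∞) and satisfies the identity f′(r) γ̃(r) + 2β² f″(r) = −2β² r for every r ≥ 0. -/
open MeasureTheory Set

private lemma ftc_aux {h : ℝ → ℝ} (hc : Continuous h) (a r : ℝ) :
    HasDerivAt (fun x => ∫ t in a..x, h t) (h r) r :=
  intervalIntegral.integral_hasDerivAt_right (hc.intervalIntegrable a r)
    (hc.stronglyMeasurableAtFilter volume _) hc.continuousAt

private lemma split_aux {g : ℝ → ℝ} (hgi : ∀ u : ℝ, IntegrableOn g (Ioi u)) {a b : ℝ}
    (hab : a ≤ b) :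
    ∫ s in Ioi a, g s = (∫ s in a..b, g s) + ∫ s in Ioi b, g s := by
  rw [intervalIntegral.integral_of_le hab,
    ← MeasureTheory.setIntegral_union (Ioc_disjoint_Ioi le_rfl) measurableSet_Ioi
      ((hgi a).mono_set Ioc_subset_Ioi_self) (hgi b), Ioc_union_Ioi_eq_Ioi hab]

/-- `f` is twice continuously differentiable on `[0,∞)` and satisfies
`f′(r) γ̃(r) + 2β² f″(r) = −2β² r` for every `r ≥ 0`. -/
theorem stmt2 (β K₁ Kσ K₂ R : ℝ) (hβ : β ≠ 0) (hK₁ : 0 ≤ K₁) (hKσ : 0 < Kσ)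
    (hK₂ : Kσ < K₂) (hR : 0 < R)
    (γ γt g : ℝ → ℝ) (f : ℝ → ℝ)
    (hγ : ∀ r, γ r = if r ≤ R then K₁ * r
      else if r ≤ 2 * R then (-((K₁ + K₂) / R) * (r - R) + K₁) * r
      else -K₂ * r)
    (hγt : ∀ v, γt v = γ v + Kσ * v)
    (hg : ∀ s, g s = s * Real.exp ((1 / (2 * β ^ 2)) * ∫ v in (0 : ℝ)..s, γt v))
    (hf : ∀ r, f r = ∫ u in (0 : ℝ)..r,
      Real.exp (-(1 / (2 * β ^ 2)) * ∫ v in (0 : ℝ)..u, γt v) * ∫ s in Ioi u, g s) :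
    ∃ f' f'' : ℝ → ℝ,
      ContinuousOn f' (Ici (0 : ℝ)) ∧ ContinuousOn f'' (Ici (0 : ℝ)) ∧
      (∀ r : ℝ, 0 ≤ r → HasDerivAt f (f' r) r) ∧
      (∀ r : ℝ, 0 ≤ r → HasDerivAt f' (f'' r) r) ∧
      (∀ r : ℝ, 0 ≤ r → f' r * γt r + 2 * β ^ 2 * f'' r = -(2 * β ^ 2) * r) := by
  have hβ2 : (0 : ℝ) < β ^ 2 := by positivity
  set c : ℝ := 1 / (2 * β ^ 2) with hc_def
  have hc : 0 < c := by positivity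
  -- continuity of γt
  have hγcont : Continuous γ := by
    have hγeq : γ = fun r => if r ≤ R then K₁ * r
        else if r ≤ 2 * R then (-((K₁ + K₂) / R) * (r - R) + K₁) * r
        else -K₂ * r := funext hγ
    rw [hγeq]
    refine Continuous.if_le ?_ ?_ continuous_id continuous_const ?_
    · fun_prop
    · refine Continuous.if_le ?_ ?_ continuous_id continuous_const ?_
      · fun_prop
      · fun_prop
      · intro x hx
        subst hx
        field_simp
        ring
    · intro x hx
      subst hx
      rw [if_pos (by linarith)]
      ring
  have hγtcont : Continuous γt := by
    have : γt = fun v => γ v + Kσ * v := funext hγt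
    rw [this]; exact hγcont.add (continuous_const.mul continuous_id)
  -- the antiderivative G of γt
  set G : ℝ → ℝ := fun r => ∫ v in (0 : ℝ)..r, γt v with hG_def
  have hGd : ∀ r, HasDerivAt G (γt r) r := fun r => ftc_aux hγtcont 0 r
  have hGcont : Continuous G :=
    continuous_iff_continuousAt.mpr fun r => (hGd r).continuousAt
  have hg' : ∀ s, g s = s * Real.exp (c * G s) := hg
  have hgcont : Continuous g := by
    have : g = fun s => s * Real.exp (c * G s) := funext hg'
    rw [this]; exact continuous_id.mul ((continuous_const.mul hGcont).rexp)
  -- γt is linear beyond 2R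
  have hγt_tail : ∀ v : ℝ, 2 * R ≤ v → γt v = -(K₂ - Kσ) * v := by
    intro v hv
    rcases eq_or_lt_of_le hv with hv' | hv'
    · rw [hγt, hγ, if_neg (by linarith), if_pos (by linarith), ← hv']
      field_simp
      ring
    · rw [hγt, hγ, if_neg (by linarith), if_neg (by linarith)]
      ring
  -- formula for G beyond 2R
  have hGtail : ∀ s : ℝ, 2 * R ≤ s →
      G s = G (2 * R) + -(K₂ - Kσ) * ((s ^ 2 - (2 * R) ^ 2) / 2) := by
    intro s hs
    have h1 : G (2 * R) + ∫ v in (2 * R)..s, γt v = G s :=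
      intervalIntegral.integral_add_adjacent_intervals
        (hγtcont.intervalIntegrable _ _) (hγtcont.intervalIntegrable _ _)
    rw [← h1]
    congr 1
    rw [intervalIntegral.integral_congr (g := fun v => -(K₂ - Kσ) * v)
      (by
        intro v hv
        rw [uIcc_of_le hs] at hv
        exact hγt_tail v hv.1)]
    rw [intervalIntegral.integral_const_mul, integral_id]
  -- integrability of g on half-lines
  have hb : 0 < c * (K₂ - Kσ) / 2 := by
    have : 0 < K₂ - Kσ := by linarith
    positivity
  set b : ℝ := c * (K₂ - Kσ) / 2 with hb_def
  have hgTail : ∀ s : ℝ, 2 * R ≤ s →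
      g s = Real.exp (c * G (2 * R) + b * (2 * R) ^ 2) * (s * Real.exp (-b * s ^ 2)) := by
    intro s hs
    rw [hg' s, hGtail s hs]
    rw [show c * (G (2 * R) + -(K₂ - Kσ) * ((s ^ 2 - (2 * R) ^ 2) / 2))
        = (c * G (2 * R) + b * (2 * R) ^ 2) + (-b * s ^ 2) by rw [hb_def]; ring,
      Real.exp_add]
    ring
  have hgint : ∀ u : ℝ, IntegrableOn g (Ioi u) := by
    intro u
    have hsub : Ioi u ⊆ Ioi (min u (2 * R)) := Ioi_subset_Ioi (min_le_left _ _)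
    apply IntegrableOn.mono_set _ hsub
    rw [← Ioc_union_Ioi_eq_Ioi (min_le_right u (2 * R))]
    apply IntegrableOn.union
    · exact hgcont.integrableOn_Ioc
    · have hint : IntegrableOn
          (fun s : ℝ => Real.exp (c * G (2 * R) + b * (2 * R) ^ 2) *
            (s * Real.exp (-b * s ^ 2))) (Ioi (2 * R)) :=
        (((integrable_mul_exp_neg_mul_sq hb).const_mul _)).integrableOn
      exact hint.congr_fun (fun s hs => (hgTail s (le_of_lt hs)).symm) measurableSet_Ioi
  -- the function F r = ∫_{Ioi r} g
  set F : ℝ → ℝ := fun r => ∫ s in Ioi r, g s with hF_def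
  have hF : ∀ r, F r = F 0 - ∫ s in (0 : ℝ)..r, g s := by
    intro r
    rcases le_total 0 r with h | h
    · have := split_aux hgint h
      simp only [hF_def]
      rw [this]; ring
    · have := split_aux hgint h
      simp only [hF_def]
      rw [this, intervalIntegral.integral_symm]
      ring
  have hFfun : F = fun r => F 0 - ∫ s in (0 : ℝ)..r, g s := funext hF
  have hFd : ∀ r, HasDerivAt F (-(g r)) r := by
    intro r
    rw [hFfun]
    exact (ftc_aux hgcont 0 r).const_sub (F 0)
  have hFcont : Continuous F :=
    continuous_iff_continuousAt.mpr fun r => (hFd r).continuousAt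
  -- the first derivative H
  set H : ℝ → ℝ := fun r => Real.exp (-c * G r) * F r with hH_def
  have hHcont : Continuous H := ((continuous_const.mul hGcont).rexp).mul hFcont
  have hfd : ∀ r, HasDerivAt f (H r) r := by
    intro r
    have hfeq : f = fun r => ∫ u in (0 : ℝ)..r, H u := funext hf
    rw [hfeq]
    exact ftc_aux hHcont 0 r
  -- second derivative
  have hHd : ∀ r, HasDerivAt H (-c * γt r * H r - r) r := by
    intro r
    have h1 : HasDerivAt (fun x => Real.exp (-c * G x))
        (Real.exp (-c * G r) * (-c * γt r)) r := by
      have := ((hGd r).const_mul (-c)).exp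
      simpa [mul_comm] using this
    have h2 := h1.mul (hFd r)
    have h3 : Real.exp (-c * G r) * (-c * γt r) * F r
        + Real.exp (-c * G r) * -(g r) = -c * γt r * H r - r := by
      rw [hg' r, hH_def]
      have hE : Real.exp (-c * G r) * Real.exp (c * G r) = 1 := by
        rw [← Real.exp_add]; simp
      simp only []
      linear_combination (-r) * hE
    rw [h3] at h2
    exact h2
  refine ⟨H, fun r => -c * γt r * H r - r, hHcont.continuousOn, ?_, fun r _ => hfd r,
    fun r _ => hHd r, ?_⟩
  · exact ((((continuous_const.mul hγtcont).mul hHcont).sub continuous_id)).continuousOn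
  · intro r _
    have h2c : 2 * β ^ 2 * c = 1 := by
      rw [hc_def]; field_simp
    simp only []
    linear_combination (-(H r * γt r)) * h2c
end

section
/- The second derivative of f satisfies f″(r) ≤ 0 for every r ≥ 0; consequently f′ is nonincreasing and 0 ≤ f′(r) ≤ f′(0) = δ for every r ≥ 0, i.e. the supremum of f′ on [0,∞) equals δ. -/
open MeasureTheory Set

private lemma tendsto_exp_quad_aux (b C : ℝ) (hb : 0 < b) :
    Filter.Tendsto (fun s : ℝ => Real.exp (C - b * s ^ 2)) Filter.atTop (nhds 0) := by
  apply Real.tendsto_exp_atBot.comp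
  have h1 : Filter.Tendsto (fun s : ℝ => b * s ^ 2) Filter.atTop Filter.atTop :=
    (Filter.tendsto_pow_atTop two_ne_zero).const_mul_atTop hb
  have h2 := Filter.tendsto_neg_atTop_atBot.comp h1
  simpa [sub_eq_add_neg, Function.comp] using
    Filter.tendsto_atBot_add_const_left Filter.atTop C h2

set_option maxHeartbeats 2000000 in
/-- `f″(r) ≤ 0` for every `r ≥ 0`; consequently `f′` is nonincreasing on `[0,∞)`
and `0 ≤ f′(r) ≤ f′(0) = δ` for every `r ≥ 0`, i.e. the supremum of `f′` on `[0,∞)` equals `δ`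
(and it is attained at `0`). -/
theorem stmt3 (β K₁ Kσ K₂ R : ℝ) (hβ : β ≠ 0) (hK₁ : 0 ≤ K₁) (hKσ : 0 < Kσ)
    (hK₂ : Kσ < K₂) (hR : 0 < R)
    (γ γt g : ℝ → ℝ) (δ : ℝ) (f f' : ℝ → ℝ)
    (hγ : ∀ r, γ r = if r ≤ R then K₁ * r
      else if r ≤ 2 * R then (-((K₁ + K₂) / R) * (r - R) + K₁) * r
      else -K₂ * r)
    (hγt : ∀ v, γt v = γ v + Kσ * v)
    (hg : ∀ s, g s = s * Real.exp ((1 / (2 * β ^ 2)) * ∫ v in (0 : ℝ)..s, γt v))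
    (hδ : δ = ∫ s in Ioi (0 : ℝ), g s)
    (hf : ∀ r, f r = ∫ u in (0 : ℝ)..r,
      Real.exp (-(1 / (2 * β ^ 2)) * ∫ v in (0 : ℝ)..u, γt v) * ∫ s in Ioi u, g s)
    (hf' : ∀ r, f' r = Real.exp (-(1 / (2 * β ^ 2)) * ∫ v in (0 : ℝ)..r, γt v) *
      ∫ s in Ioi r, g s) :
    (∃ f'' : ℝ → ℝ,
      (∀ r : ℝ, 0 ≤ r → HasDerivAt f' (f'' r) r) ∧
      (∀ r : ℝ, 0 ≤ r → f'' r ≤ 0)) ∧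
    AntitoneOn f' (Ici (0 : ℝ)) ∧
    (∀ r : ℝ, 0 ≤ r → 0 ≤ f' r ∧ f' r ≤ f' 0) ∧
    f' 0 = δ ∧
    IsGreatest (f' '' Ici (0 : ℝ)) δ := by
  have hR0 : R ≠ 0 := ne_of_gt hR
  set c : ℝ := 1 / (2 * β ^ 2) with hc
  have hc0 : 0 < c := by positivity
  set a : ℝ := K₂ - Kσ with ha
  have ha0 : 0 < a := by simp [ha]; linarith
  set I : ℝ → ℝ := fun r => ∫ v in (0 : ℝ)..r, γt v with hIdef
  -- continuity of γ and γt
  have hγcont : Continuous γ := by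
    have hfe : γ = fun r => if r ≤ R then K₁ * r
        else if r ≤ 2 * R then (-((K₁ + K₂) / R) * (r - R) + K₁) * r
        else -K₂ * r := funext hγ
    rw [hfe]
    apply Continuous.if_le (by fun_prop) ?_ continuous_id continuous_const
    · intro x hx
      subst hx
      simp only [id_eq] at *
      rw [if_pos (by linarith)]
      field_simp
      ring
    · apply Continuous.if_le (by fun_prop) (by fun_prop) continuous_id continuous_const
      intro x hx
      subst hx
      field_simp
      try ring
  have hγtcont : Continuous γt := by
    have : γt = fun v => γ v + Kσ * v := funext hγt
    rw [this]; fun_prop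
  -- FTC for I
  have hIderiv : ∀ r : ℝ, HasDerivAt I (γt r) r := by
    intro r
    exact intervalIntegral.integral_hasDerivAt_right
      (hγtcont.intervalIntegrable _ _)
      (hγtcont.stronglyMeasurable.stronglyMeasurableAtFilter)
      hγtcont.continuousAt
  have hIcont : Continuous I := by
    rw [continuous_iff_continuousAt]; exact fun r => (hIderiv r).continuousAt
  have hI0 : I 0 = 0 := intervalIntegral.integral_same
  have hγt0 : γt 0 = 0 := by simp [hγt, hγ, hR.le]
  -- rewrite g
  have hgI : ∀ s, g s = s * Real.exp (c * I s) := fun s => hg s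
  have hgcont : Continuous g := by
    have : g = fun s => s * Real.exp (c * I s) := funext hgI
    rw [this]; fun_prop
  have hgnonneg : ∀ s : ℝ, 0 ≤ s → 0 ≤ g s := by
    intro s hs; rw [hgI]; positivity
  -- exact tail formula for I
  have hItail : ∀ s : ℝ, 2 * R ≤ s → I s = I (2 * R) - a * (s ^ 2 - (2 * R) ^ 2) / 2 := by
    intro s hs
    have hadd : (∫ v in (0:ℝ)..(2*R), γt v) + ∫ v in (2*R)..s, γt v = ∫ v in (0:ℝ)..s, γt v :=
      intervalIntegral.integral_add_adjacent_intervals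
        (hγtcont.intervalIntegrable _ _) (hγtcont.intervalIntegrable _ _)
    have hcongr : (∫ v in (2*R)..s, γt v) = ∫ v in (2*R)..s, -a * v - Kσ * v + Kσ * v := by
      apply intervalIntegral.integral_congr
      intro v hv
      rw [uIcc_of_le hs] at hv
      have hv1 : 2 * R ≤ v := hv.1
      rw [hγt, hγ]
      rcases le_or_gt v R with h1 | h1
      · linarith
      · rw [if_neg (by linarith)]
        rcases le_or_gt v (2*R) with h2 | h2
        · have : v = 2 * R := le_antisymm h2 hv1
          rw [if_pos h2, this]
          field_simp
          ring
        · rw [if_neg (by linarith)]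
          simp [ha]; ring
    have hval : (∫ v in (2*R)..s, -a * v - Kσ * v + Kσ * v) = -a * (s ^ 2 - (2*R) ^ 2) / 2 := by
      have : ∀ v : ℝ, -a * v - Kσ * v + Kσ * v = -a * v := by intro v; ring
      simp only [this]
      rw [intervalIntegral.integral_const_mul, integral_id]
      ring
    simp only [hIdef]
    rw [← hadd, hcongr, hval]
    ring
  -- integrability of g on tails
  have hgInt2R : IntegrableOn g (Ioi (2 * R)) := by
    set F : ℝ → ℝ := fun s => -(1 / (c * a)) * Real.exp (c * I (2*R) + c * a * (2*R)^2 / 2 - c * a / 2 * s ^ 2) with hF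
    have hFderiv : ∀ s ∈ Ici (2*R), HasDerivAt F (g s) s := by
      intro s hs
      have h1 : HasDerivAt (fun s : ℝ => c * I (2*R) + c * a * (2*R)^2 / 2 - c * a / 2 * s ^ 2)
          (-(c * a * s)) s := by
        have := ((hasDerivAt_pow 2 s).const_mul (c * a / 2)).const_sub
          (c * I (2*R) + c * a * (2*R)^2 / 2)
        exact this.congr_deriv (by ring)
      have h2 := (h1.exp.const_mul (-(1 / (c * a))))
      refine h2.congr_deriv ?_
      rw [hgI, hItail s hs]
      have hca : c * a ≠ 0 := by positivity
      field_simp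
      ring
    have hpos : ∀ s ∈ Ioi (2*R), 0 ≤ g s := fun s hs =>
      hgnonneg s (by have := hs.out; nlinarith)
    have htend : Filter.Tendsto F Filter.atTop (nhds 0) := by
      have h := Filter.Tendsto.const_mul (-(1 / (c * a)))
        (tendsto_exp_quad_aux (c * a / 2) (c * I (2*R) + c * a * (2*R)^2 / 2) (by positivity))
      rw [mul_zero] at h
      exact h
    exact integrableOn_Ioi_deriv_of_nonneg' hFderiv hpos htend
  have hgInt : ∀ b : ℝ, (-1 : ℝ) ≤ b → IntegrableOn g (Ioi b) := by
    intro b hb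
    have h1 : IntegrableOn g (Ioc (-1 : ℝ) (2*R)) :=
      (hgcont.integrableOn_Icc).mono_set Ioc_subset_Icc_self
    have h2 : IntegrableOn g (Ioi (-1 : ℝ)) := by
      rw [← Ioc_union_Ioi_eq_Ioi (by linarith : (-1:ℝ) ≤ 2*R)]
      exact h1.union hgInt2R
    exact h2.mono_set (Ioi_subset_Ioi hb)
  -- G and its derivative
  set G : ℝ → ℝ := fun r => ∫ s in Ioi r, g s with hG
  have hGsplit : ∀ x : ℝ, x ∈ Ioi (-1:ℝ) → G (-1) = (∫ t in (-1:ℝ)..x, g t) + G x := by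
    intro x hx
    have hx' : (-1:ℝ) ≤ x := le_of_lt hx
    rw [intervalIntegral.integral_of_le hx']
    simp only [hG]
    rw [← setIntegral_union (Ioc_disjoint_Ioi le_rfl) measurableSet_Ioi
      ((hgInt (-1) le_rfl).mono_set Ioc_subset_Ioi_self) (hgInt x (by linarith)),
      Ioc_union_Ioi_eq_Ioi hx']
  have hGderiv : ∀ r : ℝ, (-1:ℝ) < r → HasDerivAt G (-(g r)) r := by
    intro r hr
    have h1 : HasDerivAt (fun x => G (-1) - ∫ t in (-1:ℝ)..x, g t) (-(g r)) r :=
      HasDerivAt.const_sub _ (intervalIntegral.integral_hasDerivAt_right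
        (hgcont.intervalIntegrable _ _)
        (hgcont.stronglyMeasurable.stronglyMeasurableAtFilter)
        hgcont.continuousAt)
    apply h1.congr_of_eventuallyEq
    filter_upwards [isOpen_Ioi.mem_nhds (show r ∈ Ioi (-1:ℝ) from hr)] with x hx
    have := hGsplit x hx
    linarith
  -- f' as product
  have hf'eq : f' = fun x => Real.exp (-c * I x) * G x := by
    funext x; exact hf' x
  have hGnonneg : ∀ r : ℝ, 0 ≤ r → 0 ≤ G r := by
    intro r hr
    apply setIntegral_nonneg measurableSet_Ioi
    intro s hs
    exact hgnonneg s (le_trans hr (le_of_lt hs))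
  have hf'nonneg : ∀ r : ℝ, 0 ≤ r → 0 ≤ f' r := by
    intro r hr
    rw [hf'eq]
    exact mul_nonneg (Real.exp_nonneg _) (hGnonneg r hr)
  -- the second derivative
  set f'' : ℝ → ℝ := fun r => -(c * γt r * f' r) - r with hf''
  have hf''deriv : ∀ r : ℝ, 0 ≤ r → HasDerivAt f' (f'' r) r := by
    intro r hr
    have hE : HasDerivAt (fun x => Real.exp (-c * I x)) (Real.exp (-c * I r) * (-c * γt r)) r :=
      ((hIderiv r).const_mul (-c)).exp
    have hmul := hE.mul (hGderiv r (by linarith))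
    rw [hf'eq]
    refine hmul.congr_deriv ?_
    have hcancel : Real.exp (-c * I r) * g r = r := by
      rw [hgI, ← mul_assoc, mul_comm (Real.exp (-c * I r)) r, mul_assoc, ← Real.exp_add]
      simp
    have h2 : Real.exp (-c * I r) * -g r = -r := by rw [mul_neg, hcancel]
    simp only [hf'', hf'eq]
    rw [sub_eq_add_neg, ← h2]
    ring
  -- key piecewise inequality : γt v * r ≤ γt r * v for 0 < r ≤ v
  have hkey : ∀ r v : ℝ, 0 < r → r ≤ v → γt v * r ≤ γt r * v := by
    intro r v hr hrv
    have hγle : γ v * r ≤ γ r * v := by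
      have hv : 0 < v := lt_of_lt_of_le hr hrv
      rw [hγ r, hγ v]
      have hdiv : 0 ≤ (K₁ + K₂) / R := div_nonneg (by linarith) hR.le
      rcases le_or_gt r R with h1 | h1
      · rw [if_pos h1]
        rcases le_or_gt v R with h2 | h2
        · rw [if_pos h2]; ring_nf; nlinarith
        · rw [if_neg (not_le.mpr h2)]
          rcases le_or_gt v (2*R) with h3 | h3
          · rw [if_pos h3]
            nlinarith [mul_nonneg (mul_nonneg hdiv (by linarith : (0:ℝ) ≤ v - R)) (mul_pos hv hr).le]
          · rw [if_neg (not_le.mpr h3)]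
            nlinarith [mul_pos hv hr]
      · rw [if_neg (not_le.mpr h1)]
        have hvR : ¬ v ≤ R := by intro h; linarith
        rw [if_neg hvR] at *
        rcases le_or_gt r (2*R) with h2 | h2
        · rw [if_pos h2]
          rcases le_or_gt v (2*R) with h3 | h3
          · rw [if_pos h3]
            nlinarith [mul_nonneg (mul_nonneg hdiv (by linarith : (0:ℝ) ≤ v - r)) (mul_pos hv hr).le]
          · rw [if_neg (not_le.mpr h3)]
            have hbound : -K₂ ≤ -((K₁ + K₂) / R) * (r - R) + K₁ := by
              rw [← sub_nonneg]
              have : -((K₁ + K₂) / R) * (r - R) + K₁ - (-K₂) = ((K₁+K₂)/R) * (2*R - r) := by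
                field_simp; ring
              rw [this]
              exact mul_nonneg hdiv (by linarith)
            nlinarith [mul_pos hv hr]
        · rw [if_neg (not_le.mpr h2)]
          have hv3 : ¬ v ≤ 2*R := by intro h; linarith
          rw [if_neg hv3]
          ring_nf
          nlinarith
    have e1 : γt v * r = γ v * r + Kσ * v * r := by rw [hγt]; ring
    have e2 : γt r * v = γ r * v + Kσ * r * v := by rw [hγt]; ring
    rw [e1, e2]
    nlinarith
  -- f'' ≤ 0
  have hf''nonpos : ∀ r : ℝ, 0 ≤ r → f'' r ≤ 0 := by
    intro r hr
    rcases eq_or_lt_of_le hr with rfl | hr0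
    · simp [hf'', hγt0]
    rcases le_or_gt 0 (γt r) with hsign | hsign
    · have h1 : 0 ≤ c * γt r * f' r :=
        mul_nonneg (mul_nonneg hc0.le hsign) (hf'nonneg r hr)
      simp only [hf'']
      linarith
    · -- hard case : γt r < 0, r > 0
      -- f' r = ∫ s in Ioi r, s * exp (c * (I s - I r))
      have hf'int : f' r = ∫ s in Ioi r, s * Real.exp (c * (I s - I r)) := by
        rw [hf'eq]
        have : (fun s => s * Real.exp (c * (I s - I r)))
            = fun s => Real.exp (-c * I r) * g s := by
          funext s
          rw [hgI, ← mul_assoc, mul_comm (Real.exp (-c * I r)) s, mul_assoc, ← Real.exp_add]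
          ring_nf
        rw [this, integral_const_mul]
      set μ : ℝ := c * (-γt r) / r with hμ
      have hμ0 : 0 < μ := by
        apply div_pos (mul_pos hc0 (by linarith)) hr0
      -- pointwise bound
      have hptbound : ∀ s : ℝ, s ∈ Ioi r →
          s * Real.exp (c * (I s - I r)) ≤ s * Real.exp (μ * r ^ 2 / 2 - μ / 2 * s ^ 2) := by
        intro s hs
        have hsr : r ≤ s := le_of_lt hs
        have hIsub : I s - I r = ∫ v in r..s, γt v := by
          have := intervalIntegral.integral_add_adjacent_intervals
            (hγtcont.intervalIntegrable (μ := volume) 0 r) (hγtcont.intervalIntegrable r s)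
          simp only [hIdef]
          linarith
        have hmono : (∫ v in r..s, γt v) ≤ ∫ v in r..s, (γt r / r) * v := by
          apply intervalIntegral.integral_mono_on hsr (hγtcont.intervalIntegrable _ _)
            ((by fun_prop : Continuous fun v : ℝ => (γt r / r) * v).intervalIntegrable _ _)
          intro v hv
          have hv1 : r ≤ v := hv.1
          have h := hkey r v hr0 hv1
          rw [div_mul_eq_mul_div, le_div_iff₀ hr0]
          linarith
        have hval : (∫ v in r..s, (γt r / r) * v) = (γt r / r) * ((s^2 - r^2)/2) := by
          rw [intervalIntegral.integral_const_mul, integral_id]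
        have hexp : c * (I s - I r) ≤ μ * r ^ 2 / 2 - μ / 2 * s ^ 2 := by
          rw [hIsub]
          have h1 : c * (∫ v in r..s, γt v) ≤ c * ((γt r / r) * ((s^2 - r^2)/2)) := by
            apply mul_le_mul_of_nonneg_left _ hc0.le
            rw [← hval]; exact hmono
          have h2 : c * ((γt r / r) * ((s^2 - r^2)/2)) = μ * r ^ 2 / 2 - μ / 2 * s ^ 2 := by
            simp only [hμ]
            field_simp
            ring
          linarith
        exact mul_le_mul_of_nonneg_left (Real.exp_le_exp.mpr hexp) (by linarith : (0:ℝ) ≤ s)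
      -- value of the comparison integral
      set F : ℝ → ℝ := fun s => -(1/μ) * Real.exp (μ * r ^ 2 / 2 - μ / 2 * s ^ 2) with hF
      have hFderiv : ∀ s ∈ Ici r, HasDerivAt F (s * Real.exp (μ * r ^ 2 / 2 - μ / 2 * s ^ 2)) s := by
        intro s _
        have h1 : HasDerivAt (fun s : ℝ => μ * r ^ 2 / 2 - μ / 2 * s ^ 2) (-(μ * s)) s := by
          have := ((hasDerivAt_pow 2 s).const_mul (μ / 2)).const_sub (μ * r ^ 2 / 2)
          exact this.congr_deriv (by ring)
        have h2 := (h1.exp.const_mul (-(1/μ)))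
        refine h2.congr_deriv ?_
        field_simp
      have hFpos : ∀ s ∈ Ioi r, 0 ≤ s * Real.exp (μ * r ^ 2 / 2 - μ / 2 * s ^ 2) := by
        intro s hs
        have : (0:ℝ) ≤ s := le_trans hr0.le (le_of_lt hs)
        positivity
      have hFtend : Filter.Tendsto F Filter.atTop (nhds 0) := by
        have h := Filter.Tendsto.const_mul (-(1/μ))
          (tendsto_exp_quad_aux (μ / 2) (μ * r ^ 2 / 2) (by positivity))
        rw [mul_zero] at h
        exact h
      have hcompint : IntegrableOn (fun s => s * Real.exp (μ * r ^ 2 / 2 - μ / 2 * s ^ 2)) (Ioi r) :=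
        integrableOn_Ioi_deriv_of_nonneg' hFderiv hFpos hFtend
      have hcompval : (∫ s in Ioi r, s * Real.exp (μ * r ^ 2 / 2 - μ / 2 * s ^ 2)) = 1/μ := by
        rw [integral_Ioi_of_hasDerivAt_of_nonneg' hFderiv hFpos hFtend]
        simp only [hF]
        rw [show μ * r ^ 2 / 2 - μ / 2 * r ^ 2 = 0 by ring, Real.exp_zero]
        ring
      have hlhsint : IntegrableOn (fun s => s * Real.exp (c * (I s - I r))) (Ioi r) := by
        have : (fun s => s * Real.exp (c * (I s - I r)))
            = fun s => Real.exp (-c * I r) * g s := by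
          funext s
          rw [hgI, ← mul_assoc, mul_comm (Real.exp (-c * I r)) s, mul_assoc, ← Real.exp_add]
          ring_nf
        rw [this]
        exact (hgInt r (by linarith)).const_mul _
      have hf'le : f' r ≤ 1/μ := by
        rw [hf'int, ← hcompval]
        exact setIntegral_mono_on hlhsint hcompint measurableSet_Ioi hptbound
      -- conclude
      have hid : c * γt r = -(μ * r) := by
        simp only [hμ]
        field_simp
      simp only [hf'']
      rw [hid]
      have h1 : μ * r * f' r ≤ μ * r * (1/μ) :=
        mul_le_mul_of_nonneg_left hf'le (mul_pos hμ0 hr0).le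
      have h2 : μ * r * (1/μ) = r := by field_simp
      linarith
  -- remaining conclusions
  have hcontf' : ContinuousOn f' (Ici (0:ℝ)) := by
    intro x hx
    exact ((hf''deriv x hx).continuousAt).continuousWithinAt
  have hanti : AntitoneOn f' (Ici (0:ℝ)) := by
    apply antitoneOn_of_deriv_nonpos (convex_Ici 0) hcontf'
    · intro x hx
      rw [interior_Ici] at hx
      exact ((hf''deriv x (le_of_lt hx)).differentiableAt).differentiableWithinAt
    · intro x hx
      rw [interior_Ici] at hx
      rw [(hf''deriv x (le_of_lt hx)).deriv]
      exact hf''nonpos x (le_of_lt hx)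
  have hf'0 : f' 0 = δ := by
    rw [hf', hδ]
    simp [hI0]
  refine ⟨⟨f'', hf''deriv, hf''nonpos⟩, hanti, ?_, hf'0, ?_⟩
  · intro r hr
    exact ⟨hf'nonneg r hr, hanti (self_mem_Ici) hr hr⟩
  · constructor
    · exact ⟨0, self_mem_Ici, hf'0⟩
    · rintro y ⟨r, hr, rfl⟩
      rw [← hf'0]
      exact hanti self_mem_Ici hr hr
end

section
/- For every r ≥ 0, the two-sided linear bound (2β²/(K₂ − K_σ)) · r ≤ f(r) ≤ δ · r holds. -/
open MeasureTheory Set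

/-- The shifted Gaussian moment integral on `Ioi u`. -/
lemma gauss_Ioi {b : ℝ} (hb : 0 < b) (u : ℝ) :
    ∫ x in Ioi u, x * Real.exp (-b * x ^ 2) = Real.exp (-b * u ^ 2) / (2 * b) := by
  have hderiv : ∀ x : ℝ, HasDerivAt (fun x : ℝ => -Real.exp (-b * x ^ 2) / (2 * b))
      (x * Real.exp (-b * x ^ 2)) x := by
    intro x
    have h1 : HasDerivAt (fun x : ℝ => -b * x ^ 2) (-b * (2 * x)) x := by
      simpa using (hasDerivAt_pow 2 x).const_mul (-b)
    have h2 := ((h1.exp).neg).div_const (2 * b)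
    refine h2.congr_deriv ?_
    rw [div_eq_iff (by positivity)]
    ring
  have htends : Filter.Tendsto (fun x : ℝ => -Real.exp (-b * x ^ 2) / (2 * b))
      Filter.atTop (nhds 0) := by
    have h0 : Filter.Tendsto (fun x : ℝ => -b * x ^ 2) Filter.atTop Filter.atBot := by
      have h1 : Filter.Tendsto (fun x : ℝ => b * x ^ 2) Filter.atTop Filter.atTop :=
        (Filter.tendsto_pow_atTop (by norm_num : (2:ℕ) ≠ 0)).const_mul_atTop hb
      have h2 := Filter.tendsto_neg_atTop_atBot.comp h1
      simpa [Function.comp_def, neg_mul] using h2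
    have := (Real.tendsto_exp_atBot.comp h0).neg.div_const (2 * b)
    simpa using this
  have hint : IntegrableOn (fun x : ℝ => x * Real.exp (-b * x ^ 2)) (Ioi u) :=
    (integrable_mul_exp_neg_mul_sq hb).integrableOn
  have := integral_Ioi_of_hasDerivAt_of_tendsto
    ((hderiv u).continuousAt.continuousWithinAt) (fun x _ => hderiv x) hint htends
  rw [this]
  ring

set_option maxHeartbeats 2000000 in
/-- for every `r ≥ 0`, `(2β²/(K₂ − K_σ)) r ≤ f(r) ≤ δ r`. -/
theorem stmt4 (β K₁ Kσ K₂ R : ℝ) (hβ : β ≠ 0) (hK₁ : 0 ≤ K₁) (hKσ : 0 < Kσ)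
    (hK₂ : Kσ < K₂) (hR : 0 < R)
    (γ γt g : ℝ → ℝ) (δ : ℝ) (f : ℝ → ℝ)
    (hγ : ∀ r, γ r = if r ≤ R then K₁ * r
      else if r ≤ 2 * R then (-((K₁ + K₂) / R) * (r - R) + K₁) * r
      else -K₂ * r)
    (hγt : ∀ v, γt v = γ v + Kσ * v)
    (hg : ∀ s, g s = s * Real.exp ((1 / (2 * β ^ 2)) * ∫ v in (0 : ℝ)..s, γt v))
    (hδ : δ = ∫ s in Ioi (0 : ℝ), g s)
    (hf : ∀ r, f r = ∫ u in (0 : ℝ)..r,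
      Real.exp (-(1 / (2 * β ^ 2)) * ∫ v in (0 : ℝ)..u, γt v) * ∫ s in Ioi u, g s) :
    ∀ r : ℝ, 0 ≤ r → (2 * β ^ 2 / (K₂ - Kσ)) * r ≤ f r ∧ f r ≤ δ * r := by
  have hβ2 : (0:ℝ) < β ^ 2 := pow_two_pos_of_ne_zero hβ
  set c : ℝ := 1 / (2 * β ^ 2) with hc_def
  have hc : 0 < c := by rw [hc_def]; exact one_div_pos.2 (by linarith)
  have hκ : 0 < K₂ - Kσ := sub_pos.2 hK₂
  have hq : 0 ≤ (K₁ + K₂) / R := div_nonneg (by linarith) hR.le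
  have hqR : (K₁ + K₂) / R * R = K₁ + K₂ := by field_simp
  -- pointwise bounds on γt
  have hγt_lb : ∀ v, 0 ≤ v → -(K₂ - Kσ) * v ≤ γt v := by
    intro v hv
    rw [hγt, hγ]
    split_ifs with h1 h2
    · nlinarith
    · nlinarith [mul_nonneg (mul_nonneg hq hv) (sub_nonneg.2 h2)]
    · nlinarith
  have hγt_ub : ∀ v, 0 ≤ v → γt v ≤ (K₁ + Kσ) * v := by
    intro v hv
    rw [hγt, hγ]
    split_ifs with h1 h2
    · nlinarith
    · nlinarith [mul_nonneg (mul_nonneg hq (sub_nonneg.2 (le_of_not_ge h1))) hv]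
    · nlinarith
  -- the slope `γt v / v` is antitone
  have hslope : ∀ u v, 0 < u → u ≤ v → γt v * u ≤ γt u * v := by
    intro u v hu huv
    have hv : 0 < v := lt_of_lt_of_le hu huv
    have key : γ v * u ≤ γ u * v := by
      rw [hγ v, hγ u]
      rcases le_or_gt v R with hv1 | hv1
      · rw [if_pos hv1, if_pos (le_trans huv hv1)]
        nlinarith
      · rw [if_neg (not_le.2 hv1)]
        rcases le_or_gt v (2*R) with hv2 | hv2
        · rw [if_pos hv2]
          rcases le_or_gt u R with hu1 | hu1
          · rw [if_pos hu1]
            nlinarith [mul_nonneg (mul_nonneg (mul_nonneg hq (sub_nonneg.2 hv1.le)) hv.le) hu.le]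
          · rw [if_neg (not_le.2 hu1), if_pos (le_trans huv hv2)]
            nlinarith [mul_nonneg (mul_nonneg (mul_nonneg hq hu.le) hv.le) (sub_nonneg.2 huv)]
        · rw [if_neg (not_le.2 hv2)]
          rcases le_or_gt u R with hu1 | hu1
          · rw [if_pos hu1]
            nlinarith [mul_pos hu hv]
          · rw [if_neg (not_le.2 hu1)]
            rcases le_or_gt u (2*R) with hu2 | hu2
            · rw [if_pos hu2]
              nlinarith [mul_nonneg (mul_nonneg (mul_nonneg hq hu.le) hv.le) (sub_nonneg.2 hu2),
                hqR, mul_pos hu hv]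
            · rw [if_neg (not_le.2 hu2)]
              nlinarith
    rw [hγt, hγt]
    nlinarith [key]
  set b : ℝ := c * (K₂ - Kσ) / 2 with hb_def
  have hb0 : 0 < b := by rw [hb_def]; have := mul_pos hc hκ; linarith
  have hee : ∀ x : ℝ, Real.exp (-c * x) * Real.exp (c * x) = 1 := fun x => by
    rw [← Real.exp_add, neg_mul, neg_add_cancel, Real.exp_zero]
  -- continuity of γ, γt
  have hγc : Continuous γ := by
    have hγeq : γ = fun r => if r ≤ R then K₁ * r
        else if r ≤ 2 * R then (-((K₁ + K₂) / R) * (r - R) + K₁) * r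
        else -K₂ * r := funext hγ
    rw [hγeq]
    apply Continuous.if_le
    · exact continuous_const.mul continuous_id
    · apply Continuous.if_le
      · exact ((continuous_const.mul (continuous_id.sub continuous_const)).add
          continuous_const).mul continuous_id
      · exact continuous_const.mul continuous_id
      · exact continuous_id
      · exact continuous_const
      · intro x hx
        rw [hx]
        field_simp
        ring
    · exact continuous_id
    · exact continuous_const
    · intro x hx
      rw [hx, if_pos (by linarith : R ≤ 2 * R)]
      ring
  have hγtc : Continuous γt := by
    have : γt = fun v => γ v + Kσ * v := funext hγt
    rw [this]
    exact hγc.add (continuous_const.mul continuous_id)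
  have hγtI : ∀ a b : ℝ, IntervalIntegrable γt volume a b := fun a b =>
    hγtc.intervalIntegrable a b
  have hΓd : ∀ u : ℝ, HasDerivAt (fun u => ∫ v in (0:ℝ)..u, γt v) (γt u) u := fun u =>
    intervalIntegral.integral_hasDerivAt_right (hγtI 0 u)
      hγtc.aestronglyMeasurable.stronglyMeasurableAtFilter hγtc.continuousAt
  have hΓc : Continuous (fun u => ∫ v in (0:ℝ)..u, γt v) :=
    continuous_iff_continuousAt.2 fun u => (hΓd u).continuousAt
  -- integral of a linear function
  have hIconst : ∀ (C a b : ℝ), ∫ v in a..b, C * v = C * (b ^ 2 - a ^ 2) / 2 := by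
    intro C a b
    rw [intervalIntegral.integral_const_mul, integral_id]
    ring
  have hlinI : ∀ (C a b : ℝ), IntervalIntegrable (fun v => C * v) volume a b := fun C a b =>
    (continuous_const.mul continuous_id).intervalIntegrable a b
  have hΓdiff : ∀ u s : ℝ,
      (∫ v in (0:ℝ)..s, γt v) - (∫ v in (0:ℝ)..u, γt v) = ∫ v in u..s, γt v := by
    intro u s
    have := intervalIntegral.integral_add_adjacent_intervals (hγtI 0 u) (hγtI u s)
    linarith
  have hΓ_lb : ∀ u s, 0 ≤ u → u ≤ s →
      -(K₂ - Kσ) * (s ^ 2 - u ^ 2) / 2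
        ≤ (∫ v in (0:ℝ)..s, γt v) - (∫ v in (0:ℝ)..u, γt v) := by
    intro u s hu hus
    rw [hΓdiff]
    have h1 : ∫ v in u..s, -(K₂ - Kσ) * v ≤ ∫ v in u..s, γt v :=
      intervalIntegral.integral_mono_on hus (hlinI _ u s) (hγtI u s)
        (fun x hx => hγt_lb x (le_trans hu hx.1))
    have h2 := hIconst (-(K₂ - Kσ)) u s
    linarith
  have hΓ_ub2 : ∀ u s, 0 < u → u ≤ s →
      (∫ v in (0:ℝ)..s, γt v) - (∫ v in (0:ℝ)..u, γt v)
        ≤ γt u / u * (s ^ 2 - u ^ 2) / 2 := by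
    intro u s hu hus
    rw [hΓdiff]
    have h1 : ∫ v in u..s, γt v ≤ ∫ v in u..s, γt u / u * v := by
      apply intervalIntegral.integral_mono_on hus (hγtI u s) (hlinI _ u s)
      intro x hx
      rw [div_mul_eq_mul_div, le_div_iff₀ hu]
      exact hslope u x hu hx.1
    have h2 := hIconst (γt u / u) u s
    linarith
  have hΓ_ub1 : ∀ s, 0 ≤ s → (∫ v in (0:ℝ)..s, γt v) ≤ (K₁ + Kσ) * s ^ 2 / 2 := by
    intro s hs
    have h1 : ∫ v in (0:ℝ)..s, γt v ≤ ∫ v in (0:ℝ)..s, (K₁ + Kσ) * v :=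
      intervalIntegral.integral_mono_on hs (hγtI 0 s) (hlinI _ 0 s)
        (fun x hx => hγt_ub x hx.1)
    have h2 := hIconst (K₁ + Kσ) 0 s
    nlinarith [h1, h2]
  set A : ℝ := 2 * R ^ 2 * (K₁ + Kσ) + 2 * R ^ 2 * (K₂ - Kσ) with hA_def
  have hΓA : ∀ s, 0 ≤ s → (∫ v in (0:ℝ)..s, γt v) ≤ A - (K₂ - Kσ) / 2 * s ^ 2 := by
    intro s hs
    rcases le_or_gt s (2 * R) with h2R | h2R
    · have h1 := hΓ_ub1 s hs
      rw [hA_def]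
      nlinarith [mul_nonneg (sub_nonneg.2 h2R) (by linarith : (0:ℝ) ≤ 2 * R + s)]
    · have key : ∀ v ∈ Set.uIcc (2 * R) s, γt v = (Kσ - K₂) * v := by
        intro v hv
        rw [Set.uIcc_of_le (by linarith)] at hv
        obtain ⟨hv1, hv2⟩ := hv
        rw [hγt, hγ, if_neg (by push_neg; linarith : ¬ v ≤ R)]
        rcases eq_or_lt_of_le hv1 with he | hlt
        · rw [if_pos (le_of_eq he.symm), ← he]
          field_simp
          ring
        · rw [if_neg (not_le.2 hlt)]
          ring
      have h3 : ∫ v in (2 * R)..s, γt v = (Kσ - K₂) * (s ^ 2 - (2 * R) ^ 2) / 2 := by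
        rw [intervalIntegral.integral_congr key, hIconst]
      have h4 := hΓdiff (2 * R) s
      have h5 := hΓ_ub1 (2 * R) (by linarith)
      rw [hA_def]
      nlinarith [h3, h4, h5]
  -- facts about g
  have hgc : Continuous g := by
    have : g = fun s => s * Real.exp (c * ∫ v in (0:ℝ)..s, γt v) := funext hg
    rw [this]
    exact continuous_id.mul (Real.continuous_exp.comp (continuous_const.mul hΓc))
  have hg_nonneg : ∀ s, 0 ≤ s → 0 ≤ g s := fun s hs => by
    rw [hg]; positivity
  have hg_int : ∀ u, 0 ≤ u → IntegrableOn g (Ioi u) := by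
    intro u hu
    have hbound : IntegrableOn
        (fun s => Real.exp (c * A) * (s * Real.exp (-b * s ^ 2))) (Ioi u) :=
      ((integrable_mul_exp_neg_mul_sq hb0).integrableOn).const_mul _
    refine hbound.mono' hgc.aestronglyMeasurable ?_
    refine (ae_restrict_iff' measurableSet_Ioi).2 (Filter.Eventually.of_forall ?_)
    intro s hs
    have hs0 : 0 ≤ s := le_trans hu (le_of_lt hs)
    rw [Real.norm_eq_abs, abs_of_nonneg (hg_nonneg s hs0), hg]
    have h1 : Real.exp (c * A) * (s * Real.exp (-b * s ^ 2))
        = s * Real.exp (c * A + -b * s ^ 2) := by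
      simp only [Real.exp_add]; ring
    rw [h1]
    apply mul_le_mul_of_nonneg_left _ hs0
    rw [Real.exp_le_exp, hb_def]
    nlinarith [mul_le_mul_of_nonneg_left (hΓA s hs0) hc.le]
  -- lower bound for the tail integral of g
  have hLlb : ∀ u, 0 ≤ u →
      2 * β ^ 2 / (K₂ - Kσ) * Real.exp (c * ∫ v in (0:ℝ)..u, γt v)
        ≤ ∫ s in Ioi u, g s := by
    intro u hu
    have hcomp : ∀ s ∈ Ioi u,
        Real.exp (c * (∫ v in (0:ℝ)..u, γt v) + b * u ^ 2) * (s * Real.exp (-b * s ^ 2))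
          ≤ g s := by
      intro s hs
      have hs0 : 0 ≤ s := le_trans hu hs.le
      rw [hg]
      have h1 : Real.exp (c * (∫ v in (0:ℝ)..u, γt v) + b * u ^ 2)
            * (s * Real.exp (-b * s ^ 2))
          = s * Real.exp (c * (∫ v in (0:ℝ)..u, γt v) + b * u ^ 2 + -b * s ^ 2) := by
        simp only [Real.exp_add]; ring
      rw [h1]
      apply mul_le_mul_of_nonneg_left _ hs0
      rw [Real.exp_le_exp, hb_def]
      nlinarith [mul_le_mul_of_nonneg_left (hΓ_lb u s hu hs.le) hc.le]
    have hint1 : IntegrableOn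
        (fun s => Real.exp (c * (∫ v in (0:ℝ)..u, γt v) + b * u ^ 2)
          * (s * Real.exp (-b * s ^ 2))) (Ioi u) :=
      ((integrable_mul_exp_neg_mul_sq hb0).integrableOn).const_mul _
    have hmono := setIntegral_mono_on hint1 (hg_int u hu) measurableSet_Ioi hcomp
    rw [MeasureTheory.integral_const_mul, gauss_Ioi hb0 u] at hmono
    have heq : Real.exp (c * (∫ v in (0:ℝ)..u, γt v) + b * u ^ 2)
          * (Real.exp (-b * u ^ 2) / (2 * b))
        = 2 * β ^ 2 / (K₂ - Kσ) * Real.exp (c * ∫ v in (0:ℝ)..u, γt v) := by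
      have hcancel : Real.exp (b * u ^ 2) * Real.exp (-b * u ^ 2) = 1 := by
        rw [show -b * u ^ 2 = -(b * u ^ 2) by ring, ← Real.exp_add, add_neg_cancel,
          Real.exp_zero]
      have hκ' : K₂ - Kσ ≠ 0 := ne_of_gt hκ
      have h2b : 2 * b = (K₂ - Kσ) / (2 * β ^ 2) := by rw [hb_def, hc_def]; ring
      calc Real.exp (c * (∫ v in (0:ℝ)..u, γt v) + b * u ^ 2)
            * (Real.exp (-b * u ^ 2) / (2 * b))
          = Real.exp (b * u ^ 2) * Real.exp (-b * u ^ 2)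
            * Real.exp (c * ∫ v in (0:ℝ)..u, γt v) / (2 * b) := by
            simp only [Real.exp_add]; ring
        _ = Real.exp (c * ∫ v in (0:ℝ)..u, γt v) / (2 * b) := by rw [hcancel, one_mul]
        _ = 2 * β ^ 2 / (K₂ - Kσ) * Real.exp (c * ∫ v in (0:ℝ)..u, γt v) := by
            rw [h2b]
            field_simp
    rw [← heq]
    linarith [hmono]
  -- upper bound for the tail integral of g at points where γt is negative
  have hLub : ∀ u, 0 < u → γt u < 0 →
      (∫ s in Ioi u, g s)
        ≤ 2 * β ^ 2 * u / (-γt u) * Real.exp (c * ∫ v in (0:ℝ)..u, γt v) := by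
    intro u hu hneg
    have ha : 0 < -γt u / u := div_pos (neg_pos.2 hneg) hu
    have hb2 : 0 < c * (-γt u / u) / 2 := by
      have := mul_pos hc ha; linarith
    set b2 : ℝ := c * (-γt u / u) / 2 with hb2_def
    have hcomp : ∀ s ∈ Ioi u, g s ≤
        Real.exp (c * (∫ v in (0:ℝ)..u, γt v) + b2 * u ^ 2)
          * (s * Real.exp (-b2 * s ^ 2)) := by
      intro s hs
      have hs0 : 0 ≤ s := le_trans hu.le hs.le
      rw [hg]
      have h1 : Real.exp (c * (∫ v in (0:ℝ)..u, γt v) + b2 * u ^ 2)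
            * (s * Real.exp (-b2 * s ^ 2))
          = s * Real.exp (c * (∫ v in (0:ℝ)..u, γt v) + b2 * u ^ 2 + -b2 * s ^ 2) := by
        simp only [Real.exp_add]; ring
      rw [h1]
      apply mul_le_mul_of_nonneg_left _ hs0
      rw [Real.exp_le_exp, hb2_def]
      have hkey := mul_le_mul_of_nonneg_left (hΓ_ub2 u s hu hs.le) hc.le
      have hdiv : c * (γt u / u * (s ^ 2 - u ^ 2) / 2)
          = -(c * (-γt u / u) / 2) * s ^ 2 + c * (-γt u / u) / 2 * u ^ 2 := by
        field_simp
        ring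
      nlinarith [hkey, hdiv]
    have hint1 : IntegrableOn
        (fun s => Real.exp (c * (∫ v in (0:ℝ)..u, γt v) + b2 * u ^ 2)
          * (s * Real.exp (-b2 * s ^ 2))) (Ioi u) :=
      ((integrable_mul_exp_neg_mul_sq hb2).integrableOn).const_mul _
    have hmono := setIntegral_mono_on (hg_int u hu.le) hint1 measurableSet_Ioi hcomp
    rw [MeasureTheory.integral_const_mul, gauss_Ioi hb2 u] at hmono
    have heq : Real.exp (c * (∫ v in (0:ℝ)..u, γt v) + b2 * u ^ 2)
          * (Real.exp (-b2 * u ^ 2) / (2 * b2))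
        = 2 * β ^ 2 * u / (-γt u) * Real.exp (c * ∫ v in (0:ℝ)..u, γt v) := by
      have hcancel : Real.exp (b2 * u ^ 2) * Real.exp (-b2 * u ^ 2) = 1 := by
        rw [show -b2 * u ^ 2 = -(b2 * u ^ 2) by ring, ← Real.exp_add, add_neg_cancel,
          Real.exp_zero]
      have hu' : u ≠ 0 := ne_of_gt hu
      have hγ' : -γt u ≠ 0 := ne_of_gt (neg_pos.2 hneg)
      have h2b : 2 * b2 = -γt u / (u * (2 * β ^ 2)) := by
        rw [hb2_def, hc_def]; field_simp
      calc Real.exp (c * (∫ v in (0:ℝ)..u, γt v) + b2 * u ^ 2)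
            * (Real.exp (-b2 * u ^ 2) / (2 * b2))
          = Real.exp (b2 * u ^ 2) * Real.exp (-b2 * u ^ 2)
            * Real.exp (c * ∫ v in (0:ℝ)..u, γt v) / (2 * b2) := by
            simp only [Real.exp_add]; ring
        _ = Real.exp (c * ∫ v in (0:ℝ)..u, γt v) / (2 * b2) := by rw [hcancel, one_mul]
        _ = 2 * β ^ 2 * u / (-γt u) * Real.exp (c * ∫ v in (0:ℝ)..u, γt v) := by
            rw [h2b]
            rw [div_div_eq_mul_div, div_mul_eq_mul_div]
            have hγ'' : γt u ≠ 0 := ne_of_lt hneg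
            field_simp [hγ'']
    rw [← heq]
    linarith [hmono]
  -- the function G
  set G : ℝ → ℝ := fun u =>
    Real.exp (-c * ∫ v in (0:ℝ)..u, γt v) * ∫ s in Ioi u, g s with hG_def
  have hconst : 0 < 2 * β ^ 2 / (K₂ - Kσ) := div_pos (by linarith) hκ
  have hGlb : ∀ u, 0 ≤ u → 2 * β ^ 2 / (K₂ - Kσ) ≤ G u := by
    intro u hu
    have h := mul_le_mul_of_nonneg_left (hLlb u hu)
      (Real.exp_pos (-c * ∫ v in (0:ℝ)..u, γt v)).le
    have h2 : Real.exp (-c * ∫ v in (0:ℝ)..u, γt v)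
          * (2 * β ^ 2 / (K₂ - Kσ) * Real.exp (c * ∫ v in (0:ℝ)..u, γt v))
        = 2 * β ^ 2 / (K₂ - Kσ) := by
      calc Real.exp (-c * ∫ v in (0:ℝ)..u, γt v)
            * (2 * β ^ 2 / (K₂ - Kσ) * Real.exp (c * ∫ v in (0:ℝ)..u, γt v))
          = 2 * β ^ 2 / (K₂ - Kσ) * (Real.exp (-c * ∫ v in (0:ℝ)..u, γt v)
            * Real.exp (c * ∫ v in (0:ℝ)..u, γt v)) := by ring
        _ = 2 * β ^ 2 / (K₂ - Kσ) := by rw [hee, mul_one]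
    simp only [hG_def]
    linarith [h, h2]
  have hGub' : ∀ u, 0 < u → γt u < 0 → G u ≤ 2 * β ^ 2 * u / (-γt u) := by
    intro u hu hneg
    have h := mul_le_mul_of_nonneg_left (hLub u hu hneg)
      (Real.exp_pos (-c * ∫ v in (0:ℝ)..u, γt v)).le
    have h2 : Real.exp (-c * ∫ v in (0:ℝ)..u, γt v)
          * (2 * β ^ 2 * u / (-γt u) * Real.exp (c * ∫ v in (0:ℝ)..u, γt v))
        = 2 * β ^ 2 * u / (-γt u) := by
      calc Real.exp (-c * ∫ v in (0:ℝ)..u, γt v)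
            * (2 * β ^ 2 * u / (-γt u) * Real.exp (c * ∫ v in (0:ℝ)..u, γt v))
          = 2 * β ^ 2 * u / (-γt u) * (Real.exp (-c * ∫ v in (0:ℝ)..u, γt v)
            * Real.exp (c * ∫ v in (0:ℝ)..u, γt v)) := by ring
        _ = 2 * β ^ 2 * u / (-γt u) := by rw [hee, mul_one]
    simp only [hG_def]
    linarith [h, h2]
  -- derivative of G
  have hDd : ∀ x : ℝ, HasDerivAt (fun y => ∫ s in (0:ℝ)..y, g s) (g x) x := fun x =>
    intervalIntegral.integral_hasDerivAt_right (hgc.intervalIntegrable _ _)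
      hgc.aestronglyMeasurable.stronglyMeasurableAtFilter hgc.continuousAt
  have hLrepr : ∀ u, 0 ≤ u → (∫ s in Ioi u, g s) = δ - ∫ s in (0:ℝ)..u, g s := by
    intro u hu
    rw [hδ, intervalIntegral.integral_of_le hu]
    have hsplit : Ioc (0:ℝ) u ∪ Ioi u = Ioi 0 := Ioc_union_Ioi_eq_Ioi hu
    rw [← hsplit, setIntegral_union Ioc_disjoint_Ioi_same measurableSet_Ioi
      ((hg_int 0 le_rfl).mono_set Ioc_subset_Ioi_self) (hg_int u hu)]
    ring
  have hGd : ∀ u, 0 < u → HasDerivAt G (-c * γt u * G u - u) u := by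
    intro u hu
    have h1 : HasDerivAt (fun y => Real.exp (-c * ∫ v in (0:ℝ)..y, γt v))
        (-c * γt u * Real.exp (-c * ∫ v in (0:ℝ)..u, γt v)) u := by
      have h := ((hΓd u).const_mul (-c)).exp
      convert h using 1
      ring
    have h2 : HasDerivAt (fun y => ∫ s in Ioi y, g s) (-(g u)) u := by
      have h3 : HasDerivAt (fun y => δ - ∫ s in (0:ℝ)..y, g s) (-(g u)) u :=
        (hDd u).const_sub δ
      apply h3.congr_of_eventuallyEq
      filter_upwards [isOpen_Ioi.mem_nhds hu] with y hy
      exact hLrepr y (le_of_lt hy)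
    have h4 := h1.mul h2
    have h5 : Real.exp (-c * ∫ v in (0:ℝ)..u, γt v) * g u = u := by
      rw [hg]
      calc Real.exp (-c * ∫ v in (0:ℝ)..u, γt v)
            * (u * Real.exp (c * ∫ v in (0:ℝ)..u, γt v))
          = u * (Real.exp (-c * ∫ v in (0:ℝ)..u, γt v)
            * Real.exp (c * ∫ v in (0:ℝ)..u, γt v)) := by ring
        _ = u := by rw [hee, mul_one]
    refine h4.congr_deriv ?_
    simp only [hG_def]
    linear_combination -h5
  have hGd_le : ∀ u, 0 < u → -c * γt u * G u - u ≤ 0 := by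
    intro u hu
    rcases le_or_gt 0 (γt u) with hpos | hneg
    · have h1 : 0 ≤ c * γt u * G u :=
        mul_nonneg (mul_nonneg hc.le hpos) (le_trans hconst.le (hGlb u hu.le))
      nlinarith [h1, hu]
    · have key := hGub' u hu hneg
      have hγpos : 0 < -γt u := neg_pos.2 hneg
      have h2 : G u * (-γt u) ≤ 2 * β ^ 2 * u := (le_div_iff₀ hγpos).1 key
      have h4 : c * (2 * β ^ 2 * u) = u := by rw [hc_def]; field_simp
      nlinarith [mul_le_mul_of_nonneg_left h2 hc.le, h4]
  have hDcont : Continuous (fun y => ∫ s in (0:ℝ)..y, g s) :=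
    continuous_iff_continuousAt.2 fun x => (hDd x).continuousAt
  have hGcont : ContinuousOn G (Ici 0) := by
    simp only [hG_def]
    apply ContinuousOn.mul
    · exact (Real.continuous_exp.comp (continuous_const.mul hΓc)).continuousOn
    · exact ContinuousOn.congr ((continuous_const.sub hDcont).continuousOn)
        (fun y hy => hLrepr y hy)
  have hGanti : AntitoneOn G (Ici 0) := by
    apply antitoneOn_of_deriv_nonpos (convex_Ici 0) hGcont
    · intro x hx
      rw [interior_Ici] at hx
      exact (hGd x hx).differentiableAt.differentiableWithinAt
    · intro x hx
      rw [interior_Ici] at hx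
      rw [(hGd x hx).deriv]
      exact hGd_le x hx
  have hG0 : G 0 = δ := by
    simp only [hG_def]
    rw [intervalIntegral.integral_same, hδ]
    simp
  have hGub : ∀ u, 0 ≤ u → G u ≤ δ := fun u hu => hG0 ▸ hGanti self_mem_Ici hu hu
  -- conclusion
  intro r hr
  have hfr : f r = ∫ u in (0:ℝ)..r, G u := hf r
  have hGint : IntervalIntegrable G volume 0 r :=
    (hGcont.mono (by rw [uIcc_of_le hr]; exact Icc_subset_Ici_self)).intervalIntegrable
  constructor
  · have h1 : (∫ _ in (0:ℝ)..r, 2 * β ^ 2 / (K₂ - Kσ)) ≤ ∫ u in (0:ℝ)..r, G u :=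
      intervalIntegral.integral_mono_on hr intervalIntegrable_const hGint
        (fun x hx => hGlb x hx.1)
    have h2 : (∫ _ in (0:ℝ)..r, 2 * β ^ 2 / (K₂ - Kσ)) = 2 * β ^ 2 / (K₂ - Kσ) * r := by
      rw [intervalIntegral.integral_const]
      simp [smul_eq_mul]
      ring
    rw [hfr]
    linarith [h1, h2]
  · have h1 : (∫ u in (0:ℝ)..r, G u) ≤ ∫ _ in (0:ℝ)..r, δ :=
      intervalIntegral.integral_mono_on hr hGint intervalIntegrable_const
        (fun x hx => hGub x hx.1)
    have h2 : (∫ _ in (0:ℝ)..r, δ) = δ * r := by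
      rw [intervalIntegral.integral_const]
      simp [smul_eq_mul]
      ring
    rw [hfr]
    linarith [h1, h2]
end

section
/- As r → ∞, both f(r)/r and f′(r) converge to the limit 2β²/(K₂ − K_σ). -/
open MeasureTheory Set Filter

/-- as `r → ∞`, both `f(r)/r` and `f′(r)` converge to `2β²/(K₂ − K_σ)`. -/
theorem stmt5 (β K₁ Kσ K₂ R : ℝ) (hβ : β ≠ 0) (hK₁ : 0 ≤ K₁) (hKσ : 0 < Kσ)
    (hK₂ : Kσ < K₂) (hR : 0 < R)
    (γ γt g : ℝ → ℝ) (f f' : ℝ → ℝ)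
    (hγ : ∀ r, γ r = if r ≤ R then K₁ * r
      else if r ≤ 2 * R then (-((K₁ + K₂) / R) * (r - R) + K₁) * r
      else -K₂ * r)
    (hγt : ∀ v, γt v = γ v + Kσ * v)
    (hg : ∀ s, g s = s * Real.exp ((1 / (2 * β ^ 2)) * ∫ v in (0 : ℝ)..s, γt v))
    (hf : ∀ r, f r = ∫ u in (0 : ℝ)..r,
      Real.exp (-(1 / (2 * β ^ 2)) * ∫ v in (0 : ℝ)..u, γt v) * ∫ s in Ioi u, g s)
    (hf' : ∀ r, f' r = Real.exp (-(1 / (2 * β ^ 2)) * ∫ v in (0 : ℝ)..r, γt v) *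
      ∫ s in Ioi r, g s) :
    Tendsto (fun r => f r / r) atTop (nhds (2 * β ^ 2 / (K₂ - Kσ))) ∧
    Tendsto f' atTop (nhds (2 * β ^ 2 / (K₂ - Kσ))) := by
  have hβ2 : (0:ℝ) < 2 * β ^ 2 := by positivity
  have hK : (0:ℝ) < K₂ - Kσ := sub_pos.2 hK₂
  have hK12 : (0:ℝ) < K₁ + K₂ := by linarith
  set c : ℝ := 1 / (2 * β ^ 2) with hc_def
  have hc : 0 < c := by positivity
  set L : ℝ := 2 * β ^ 2 / (K₂ - Kσ) with hL_def
  have hL : 0 < L := by positivity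
  set b : ℝ := (K₂ - Kσ) * c with hb_def
  have hb : 0 < b := mul_pos hK hc
  have hLb : L * b = 1 := by
    rw [hL_def, hb_def, hc_def]; field_simp
  -- continuity of γt
  have hγt_eq : γt = fun r => (max (-K₂) (min K₁ (-((K₁ + K₂) / R) * (r - R) + K₁))) * r
      + Kσ * r := by
    funext r
    rw [hγt r, hγ r]
    have hdivpos : 0 < (K₁ + K₂) / R := div_pos hK12 hR
    split_ifs with h1 h2
    · have hE : K₁ ≤ -((K₁ + K₂) / R) * (r - R) + K₁ := by nlinarith
      rw [min_eq_left hE, max_eq_right (by linarith : -K₂ ≤ K₁)]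
    · have hE1 : -((K₁ + K₂) / R) * (r - R) + K₁ ≤ K₁ := by nlinarith
      have hE2 : -K₂ ≤ -((K₁ + K₂) / R) * (r - R) + K₁ := by
        have key : -((K₁ + K₂) / R) * (r - R) + K₁ + K₂ = (K₁ + K₂) * (2 * R - r) / R := by
          field_simp; ring
        nlinarith [div_nonneg (mul_nonneg hK12.le (by linarith : (0:ℝ) ≤ 2 * R - r)) hR.le]
      rw [min_eq_right hE1, max_eq_right hE2]
    · have hE1 : -((K₁ + K₂) / R) * (r - R) + K₁ ≤ K₁ := by nlinarith
      have hE2 : -((K₁ + K₂) / R) * (r - R) + K₁ ≤ -K₂ := by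
        have key : -((K₁ + K₂) / R) * (r - R) + K₁ + K₂ = (K₁ + K₂) * (2 * R - r) / R := by
          field_simp; ring
        nlinarith [div_nonpos_of_nonpos_of_nonneg
          (mul_nonpos_of_nonneg_of_nonpos hK12.le (by linarith : 2 * R - r ≤ 0)) hR.le]
      rw [min_eq_right hE1, max_eq_left hE2]
  have hγt_cont : Continuous γt := by
    rw [hγt_eq]
    exact ((continuous_const.max ((continuous_const.min
      (((continuous_const.mul (continuous_id.sub continuous_const))).add
        continuous_const)))).mul continuous_id).add (continuous_const.mul continuous_id)
  have hint : ∀ a b : ℝ, IntervalIntegrable γt volume a b :=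
    fun a b => hγt_cont.intervalIntegrable a b
  have hIcont : Continuous (fun u => ∫ v in (0:ℝ)..u, γt v) :=
    intervalIntegral.continuous_primitive hint 0
  -- the integral difference identity
  have hIdiff : ∀ r s : ℝ, 2 * R ≤ r → r ≤ s →
      (∫ v in (0:ℝ)..s, γt v) = (∫ v in (0:ℝ)..r, γt v) - (K₂ - Kσ) * (s^2 - r^2) / 2 := by
    intro r s hr hrs
    have hsplit : (∫ v in (0:ℝ)..r, γt v) + (∫ v in r..s, γt v) = ∫ v in (0:ℝ)..s, γt v :=
      intervalIntegral.integral_add_adjacent_intervals (hint 0 r) (hint r s)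
    have heq : (∫ v in r..s, γt v) = ∫ v in r..s, (Kσ - K₂) * v := by
      apply intervalIntegral.integral_congr
      intro v hv
      rw [uIcc_of_le hrs] at hv
      have hv1 : 2 * R ≤ v := le_trans hr hv.1
      rw [hγt v, hγ v]
      rw [if_neg (by push_neg; linarith : ¬ v ≤ R)]
      split_ifs with h2
      · have hveq : v = 2 * R := le_antisymm h2 hv1
        rw [hveq]
        field_simp
        ring
      · ring
    have hval : (∫ v in r..s, (Kσ - K₂) * v) = (Kσ - K₂) * ((s^2 - r^2) / 2) := by
      rw [intervalIntegral.integral_const_mul, integral_id]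
    rw [← hsplit, heq, hval]; ring
  -- the key improper integral computation
  have key : ∀ r : ℝ, 2 * R ≤ r →
      (∫ s in Ioi r, g s) = L * Real.exp (c * ∫ v in (0:ℝ)..r, γt v) ∧
      IntegrableOn g (Ioi r) := by
    intro r hr
    have hr0 : 0 < r := lt_of_lt_of_le (by linarith) hr
    set Ir : ℝ := ∫ v in (0:ℝ)..r, γt v with hIr
    set F : ℝ → ℝ := fun s => -L * Real.exp (c * Ir - b * (s^2 - r^2) / 2) with hF
    have hFderiv : ∀ s ∈ Ioi r, HasDerivAt F (g s) s := by
      intro s hs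
      have hs' : r ≤ s := le_of_lt hs
      have h1 : HasDerivAt (fun s : ℝ => c * Ir - b * (s^2 - r^2) / 2) (-(b * s)) s := by
        have hp : HasDerivAt (fun s : ℝ => s ^ 2) (2 * s) s := by
          simpa using hasDerivAt_pow 2 s
        have h2 := (((hp.sub_const (r ^ 2)).const_mul b).div_const 2).const_sub (c * Ir)
        exact h2.congr_deriv (by ring)
      have h2 := (h1.exp).const_mul (-L)
      refine h2.congr_deriv (Eq.symm ?_)
      rw [hg s, hIdiff r s hr hs', ← hIr]
      have harg : c * (Ir - (K₂ - Kσ) * (s^2 - r^2) / 2) = c * Ir - b * (s^2 - r^2) / 2 := by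
        rw [hb_def]; ring
      rw [harg]
      linear_combination (-(s * Real.exp (c * Ir - b * (s^2 - r^2) / 2))) * hLb
    have hFcont : ContinuousWithinAt F (Ici r) r := by
      apply Continuous.continuousWithinAt
      apply continuous_const.mul
      exact Real.continuous_exp.comp (by fun_prop)
    have hgpos : ∀ s ∈ Ioi r, 0 ≤ g s := by
      intro s hs
      rw [hg s]
      have hs0 : 0 ≤ s := le_of_lt (lt_trans hr0 hs)
      positivity
    have hFtend : Tendsto F atTop (nhds 0) := by
      have h2 : Tendsto (fun s : ℝ => (b / 2) * s ^ 2) atTop atTop :=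
        (tendsto_pow_atTop two_ne_zero).const_mul_atTop (by positivity)
      have h3 : Tendsto (fun s : ℝ => (c * Ir + b * r ^ 2 / 2) + -((b / 2) * s ^ 2))
          atTop atBot :=
        tendsto_atBot_add_const_left atTop _ (tendsto_neg_atTop_atBot.comp h2)
      have h4 : Tendsto (fun s : ℝ => c * Ir - b * (s^2 - r^2) / 2) atTop atBot := by
        refine h3.congr (fun s => by ring)
      have h5 : Tendsto (fun s : ℝ => Real.exp (c * Ir - b * (s^2 - r^2) / 2))
          atTop (nhds 0) := Real.tendsto_exp_atBot.comp h4
      have h6 := h5.const_mul (-L)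
      rw [hF]
      simpa using h6
    have hVal := integral_Ioi_of_hasDerivAt_of_nonneg hFcont hFderiv hgpos hFtend
    have hInt := integrableOn_Ioi_deriv_of_nonneg hFcont hFderiv hgpos hFtend
    refine ⟨?_, hInt⟩
    rw [hVal, hF]
    simp only [sub_self, zero_sub, neg_mul, neg_neg]
    ring_nf
  -- f' is constant L for r ≥ 2R
  have hf'L : ∀ r : ℝ, 2 * R ≤ r → f' r = L := by
    intro r hr
    rw [hf' r, (key r hr).1]
    have hx : Real.exp (-c * ∫ v in (0:ℝ)..r, γt v) * Real.exp (c * ∫ v in (0:ℝ)..r, γt v)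
        = 1 := by
      rw [← Real.exp_add]
      norm_num
    linear_combination L * hx
  -- integrability of the integrand of f on [0, 2R]
  have hg_eq : g = fun s => s * Real.exp (c * ∫ v in (0:ℝ)..s, γt v) := by
    funext s; rw [hg s, hc_def]
  have hgcont : Continuous g := by
    rw [hg_eq]
    exact continuous_id.mul (Real.continuous_exp.comp (continuous_const.mul hIcont))
  have hgIoiInt : ∀ u : ℝ, u ≤ 2 * R → IntegrableOn g (Ioi u) := by
    intro u hu
    have h1 : IntegrableOn g (Ioc u (2 * R)) := hgcont.integrableOn_Ioc
    have h2 : IntegrableOn g (Ioi (2 * R)) := (key (2 * R) le_rfl).2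
    have h3 := h1.union h2
    rwa [Ioc_union_Ioi_eq_Ioi hu] at h3
  have hHeq : ∀ u : ℝ, u ≤ 2 * R → (∫ s in Ioi u, g s)
      = (∫ s in u..(2 * R), g s) + ∫ s in Ioi (2 * R), g s := by
    intro u hu
    rw [intervalIntegral.integral_of_le hu]
    rw [← Ioc_union_Ioi_eq_Ioi hu,
      setIntegral_union (Ioc_disjoint_Ioi le_rfl) measurableSet_Ioi
        hgcont.integrableOn_Ioc ((key (2 * R) le_rfl).2)]
  set h : ℝ → ℝ := fun u =>
    Real.exp (-c * ∫ v in (0:ℝ)..u, γt v) * ∫ s in Ioi u, g s with hh_def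
  have hf_h : ∀ r, f r = ∫ u in (0:ℝ)..r, h u := by
    intro r; rw [hf r]
  have hf'_h : ∀ r, f' r = h r := by
    intro r; rw [hf' r]
  have hGcont : Continuous (fun u : ℝ => Real.exp (-c * ∫ v in (0:ℝ)..u, γt v)
      * ((∫ s in u..(2 * R), g s) + ∫ s in Ioi (2 * R), g s)) := by
    apply Continuous.mul
    · exact Real.continuous_exp.comp (continuous_const.mul hIcont)
    · apply Continuous.add _ continuous_const
      have hcp : Continuous (fun u : ℝ => ∫ s in (2 * R)..u, g s) :=
        intervalIntegral.continuous_primitive (fun a b => hgcont.intervalIntegrable a b) _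
      have := hcp.neg
      refine this.congr (fun u => ?_)
      rw [Pi.neg_apply, ← intervalIntegral.integral_symm]
  have hhInt1 : IntervalIntegrable h volume 0 (2 * R) := by
    apply ContinuousOn.intervalIntegrable
    apply hGcont.continuousOn.congr
    intro u hu
    rw [uIcc_of_le (by linarith : (0:ℝ) ≤ 2 * R)] at hu
    rw [hh_def]
    simp only
    rw [hHeq u hu.2]
  have hhInt2 : ∀ r : ℝ, 2 * R ≤ r → IntervalIntegrable h volume (2 * R) r := by
    intro r hr
    apply ContinuousOn.intervalIntegrable
    apply ContinuousOn.congr (continuousOn_const (c := L))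
    intro u hu
    rw [uIcc_of_le hr] at hu
    rw [← hf'_h u, hf'L u hu.1]
  have hfr : ∀ r : ℝ, 2 * R ≤ r → f r = f (2 * R) + L * (r - 2 * R) := by
    intro r hr
    rw [hf_h r, hf_h (2 * R),
      ← intervalIntegral.integral_add_adjacent_intervals hhInt1 (hhInt2 r hr)]
    congr 1
    have : (∫ u in (2 * R)..r, h u) = ∫ u in (2 * R)..r, L := by
      apply intervalIntegral.integral_congr
      intro u hu
      rw [uIcc_of_le hr] at hu
      rw [← hf'_h u, hf'L u hu.1]
    rw [this, intervalIntegral.integral_const, smul_eq_mul, mul_comm]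
  constructor
  · have htend : Tendsto (fun r : ℝ => (f (2 * R) - L * (2 * R)) / r + L) atTop (nhds L) := by
      have h0 : Tendsto (fun r : ℝ => (f (2 * R) - L * (2 * R)) / r) atTop (nhds 0) :=
        tendsto_const_nhds.div_atTop tendsto_id
      simpa using h0.add (tendsto_const_nhds (x := L))
    apply htend.congr'
    filter_upwards [eventually_ge_atTop (2 * R), eventually_gt_atTop (0:ℝ)] with r h1 h2
    rw [hfr r h1]
    field_simp
    ring
  · apply (tendsto_const_nhds (x := L)).congr'
    filter_upwards [eventually_ge_atTop (2 * R)] with r h1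
    exact (hf'L r h1).symm
end

section
/- Let ε ∈ (0,1] and let π : [0,∞) → [0,1] be any function with π(x) = 1 for x ≥ ε and π(x) = 0 for x ≤ ε/2. Then for every r ≥ 0, f′(r) γ̃(r) + 2β² f″(r) π(r)² ≤ −2β² r + ℓ(ε), where ℓ(ε) := 2β² ε + δ ( sup_{s ∈ [0,ε]} max(γ(s), 0) + K_σ ε ). -/
open MeasureTheory Set

set_option maxHeartbeats 1000000 in
/-- for `ε ∈ (0,1]` and any `π : [0,∞) → [0,1]` with `π = 1` on `[ε,∞)` and
`π = 0` on `[0, ε/2]`, one has for every `r ≥ 0`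
`f′(r) γ̃(r) + 2β² f″(r) π(r)² ≤ −2β² r + ℓ(ε)` where
`ℓ(ε) = 2β² ε + δ (sup_{s ∈ [0,ε]} γ(s)⁺ + K_σ ε)`. -/
theorem stmt6 (β K₁ Kσ K₂ R : ℝ) (hβ : β ≠ 0) (hK₁ : 0 ≤ K₁) (hKσ : 0 < Kσ)
    (hK₂ : Kσ < K₂) (hR : 0 < R)
    (γ γt g : ℝ → ℝ) (δ : ℝ) (f f' : ℝ → ℝ)
    (hγ : ∀ r, γ r = if r ≤ R then K₁ * r
      else if r ≤ 2 * R then (-((K₁ + K₂) / R) * (r - R) + K₁) * r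
      else -K₂ * r)
    (hγt : ∀ v, γt v = γ v + Kσ * v)
    (hg : ∀ s, g s = s * Real.exp ((1 / (2 * β ^ 2)) * ∫ v in (0 : ℝ)..s, γt v))
    (hδ : δ = ∫ s in Ioi (0 : ℝ), g s)
    (hf : ∀ r, f r = ∫ u in (0 : ℝ)..r,
      Real.exp (-(1 / (2 * β ^ 2)) * ∫ v in (0 : ℝ)..u, γt v) * ∫ s in Ioi u, g s)
    (hf' : ∀ r, f' r = Real.exp (-(1 / (2 * β ^ 2)) * ∫ v in (0 : ℝ)..r, γt v) *
      ∫ s in Ioi r, g s)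
    (ε : ℝ) (hε : 0 < ε) (hε1 : ε ≤ 1)
    (π : ℝ → ℝ) (hπ : ∀ x, 0 ≤ x → π x ∈ Icc (0 : ℝ) 1)
    (hπ1 : ∀ x, ε ≤ x → π x = 1) (hπ0 : ∀ x, 0 ≤ x → x ≤ ε / 2 → π x = 0)
    (ℓ : ℝ)
    (hℓ : ℓ = 2 * β ^ 2 * ε +
      δ * (sSup ((fun s => max (γ s) 0) '' Icc (0 : ℝ) ε) + Kσ * ε)) :
    ∀ f'' : ℝ → ℝ, (∀ r : ℝ, 0 ≤ r → HasDerivAt f' (f'' r) r) →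
      ∀ r : ℝ, 0 ≤ r →
        f' r * γt r + 2 * β ^ 2 * f'' r * (π r) ^ 2 ≤ -(2 * β ^ 2) * r + ℓ := by
  intro f'' hf'' r hr
  have hBpos : (0:ℝ) < 2 * β ^ 2 := by positivity
  have hK₂0 : 0 < K₂ := hKσ.trans hK₂
  -- continuity of γ and γt
  have hγc : Continuous γ := by
    rw [funext hγ]
    refine Continuous.if_le (by fun_prop) ?_ continuous_id continuous_const ?_
    · refine Continuous.if_le (by fun_prop) (by fun_prop) continuous_id continuous_const ?_
      intro x hx
      change x = _ at hx
      subst hx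
      field_simp
      ring
    · intro x hx
      change x = _ at hx
      subst hx
      rw [if_pos (by linarith)]
      ring
  have hγtc : Continuous γt := by
    rw [funext hγt]; exact hγc.add (continuous_const.mul continuous_id)
  have hγle : ∀ s, 0 ≤ s → γ s ≤ K₁ * s := by
    intro s hs
    rw [hγ]
    split_ifs with h1 h2
    · exact le_rfl
    · nlinarith [mul_nonneg (mul_nonneg (div_nonneg (by linarith : (0:ℝ) ≤ K₁ + K₂) hR.le)
        (by linarith : (0:ℝ) ≤ s - R)) hs]
    · nlinarith [mul_nonneg hK₂0.le hs, mul_nonneg hK₁ hs]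
  have hγtail : ∀ v, 2 * R ≤ v → γt v = (Kσ - K₂) * v := by
    intro v hv
    rw [hγt, hγ]
    split_ifs with h1 h2
    · linarith
    · have h3 : v = 2 * R := le_antisymm h2 hv
      subst h3
      field_simp
      ring
    · ring
  have hsign : ∀ r', 0 < γt r' → ∀ v, 0 ≤ v → v ≤ r' → 0 ≤ γt v := by
    intro r hrpos v hv0 hvr
    by_cases hvR : v ≤ R
    · rw [hγt, hγ, if_pos hvR]; nlinarith
    · push_neg at hvR
      have hr2R : r ≤ 2 * R := by
        by_contra h
        push_neg at h
        rw [hγt, hγ, if_neg (by linarith), if_neg (by linarith)] at hrpos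
        nlinarith
      have hrR : R < r := lt_of_lt_of_le hvR hvr
      have hrpos' := hrpos
      rw [hγt, hγ, if_neg (by linarith), if_pos hr2R] at hrpos'
      have hbr : 0 < -((K₁ + K₂) / R) * (r - R) + K₁ + Kσ := by nlinarith
      have hbv : -((K₁ + K₂) / R) * (r - R) + K₁ + Kσ ≤ -((K₁ + K₂) / R) * (v - R) + K₁ + Kσ := by
        have h4 : 0 ≤ (K₁ + K₂) / R := div_nonneg (by linarith) hR.le
        nlinarith
      rw [hγt, hγ, if_neg (by linarith), if_pos (by linarith)]
      nlinarith
  -- G and its derivative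
  set G : ℝ → ℝ := fun u => ∫ v in (0:ℝ)..u, γt v with hG
  have hGd : ∀ u : ℝ, HasDerivAt G (γt u) u := fun u =>
    intervalIntegral.integral_hasDerivAt_right (hγtc.intervalIntegrable 0 u)
      (hγtc.stronglyMeasurableAtFilter _ _) hγtc.continuousAt
  have hGc : Continuous G := by
    rw [continuous_iff_continuousAt]; exact fun u => (hGd u).continuousAt
  have hgG : ∀ s, g s = s * Real.exp ((1 / (2 * β ^ 2)) * G s) := by
    intro s; rw [hg]
  have hgc : Continuous g := by rw [funext hgG]; fun_prop
  have hgnn : ∀ s, 0 ≤ s → 0 ≤ g s := by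
    intro s hs; rw [hg]; exact mul_nonneg hs (Real.exp_pos _).le
  -- tail formula for G
  have hGtail : ∀ s, 2 * R ≤ s →
      G s = G (2 * R) + (Kσ - K₂) / 2 * (s ^ 2 - (2 * R) ^ 2) := by
    intro s hs
    have h1 : G (2*R) + ∫ v in (2*R)..s, γt v = G s :=
      intervalIntegral.integral_add_adjacent_intervals (hγtc.intervalIntegrable _ _)
        (hγtc.intervalIntegrable _ _)
    have h2 : ∫ v in (2*R)..s, γt v = ∫ v in (2*R)..s, (Kσ - K₂) * v := by
      apply intervalIntegral.integral_congr
      intro v hv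
      rw [uIcc_of_le hs] at hv
      exact hγtail v hv.1
    rw [← h1, h2, intervalIntegral.integral_const_mul, integral_id]
    ring
  -- integrability of g on Ioi 0
  have hgint : IntegrableOn g (Ioi (0:ℝ)) := by
    have h0 : Ioc (0:ℝ) (2*R) ∪ Ioi (2*R) = Ioi 0 := Ioc_union_Ioi_eq_Ioi (by linarith)
    rw [← h0]
    apply IntegrableOn.union
    · exact hgc.integrableOn_Ioc
    · obtain ⟨c, hc⟩ : ∃ c : ℝ, c = (K₂ - Kσ) / (2 * (2 * β ^ 2)) := ⟨_, rfl⟩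
      have hcpos : 0 < c := by
        rw [hc]; exact div_pos (by linarith) (by positivity)
      obtain ⟨a, ha⟩ : ∃ a : ℝ, a = (1 / (2 * β ^ 2)) * G (2*R) + c * (2*R)^2 := ⟨_, rfl⟩
      have h1 : IntegrableOn (fun s => Real.exp a * (s * Real.exp (-c * s ^ 2))) (Ioi (2*R)) :=
        (((integrable_mul_exp_neg_mul_sq hcpos).const_mul (Real.exp a))).integrableOn
      apply h1.congr_fun ?_ measurableSet_Ioi
      intro s hs
      simp only [mem_Ioi] at hs
      simp only []
      rw [hgG, hGtail s hs.le]
      have harg : 1 / (2 * β ^ 2) * (G (2*R) + (Kσ - K₂) / 2 * (s ^ 2 - (2*R) ^ 2))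
          = a + -c * s ^ 2 := by
        rw [ha, hc]; field_simp; ring
      rw [harg, Real.exp_add]
      ring
  -- tail identity
  have hT : ∀ u : ℝ, ∫ s in Ioi u, g s = δ - ∫ s in (0:ℝ)..u, g s := by
    intro u
    rcases le_or_gt 0 u with hu | hu
    · have hsplit : Ioc (0:ℝ) u ∪ Ioi u = Ioi 0 := Ioc_union_Ioi_eq_Ioi hu
      have h1 : ∫ s in Ioi (0:ℝ), g s = (∫ s in Ioc (0:ℝ) u, g s) + ∫ s in Ioi u, g s := by
        rw [← hsplit]
        exact setIntegral_union (Ioc_disjoint_Ioi le_rfl) measurableSet_Ioi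
          hgc.integrableOn_Ioc (hgint.mono_set (Ioi_subset_Ioi hu))
      rw [hδ, h1, intervalIntegral.integral_of_le hu]
      ring
    · have hsplit : Ioc u (0:ℝ) ∪ Ioi (0:ℝ) = Ioi u := Ioc_union_Ioi_eq_Ioi hu.le
      have h1 : ∫ s in Ioi u, g s = (∫ s in Ioc u (0:ℝ), g s) + ∫ s in Ioi (0:ℝ), g s := by
        rw [← hsplit]
        exact setIntegral_union (Ioc_disjoint_Ioi le_rfl) measurableSet_Ioi
          hgc.integrableOn_Ioc hgint
      rw [hδ, h1, intervalIntegral.integral_symm, intervalIntegral.integral_of_le hu.le]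
      ring
  -- f' closed form
  have hf'eq : ∀ u : ℝ, f' u = Real.exp (-(1 / (2 * β ^ 2)) * G u) *
      (δ - ∫ s in (0:ℝ)..u, g s) := by
    intro u
    rw [hf', hT]
  -- derivative of f'
  have hd2 : HasDerivAt (fun u => δ - ∫ s in (0:ℝ)..u, g s) (-(g r)) r := by
    have := intervalIntegral.integral_hasDerivAt_right (hgc.intervalIntegrable 0 r)
      (hgc.stronglyMeasurableAtFilter _ _) hgc.continuousAt
    exact this.const_sub δ
  have hd1 : HasDerivAt (fun u => Real.exp (-(1 / (2 * β ^ 2)) * G u))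
      (Real.exp (-(1 / (2 * β ^ 2)) * G r) * (-(1 / (2 * β ^ 2)) * γt r)) r := by
    exact (((hGd r).const_mul (-(1 / (2 * β ^ 2))))).exp
  have hDf' : HasDerivAt f'
      (Real.exp (-(1 / (2 * β ^ 2)) * G r) * (-(1 / (2 * β ^ 2)) * γt r) *
        (δ - ∫ s in (0:ℝ)..r, g s) +
        Real.exp (-(1 / (2 * β ^ 2)) * G r) * (-(g r))) r := by
    rw [funext hf'eq]
    exact hd1.mul hd2
  -- key identity
  have hexp_g : Real.exp (-(1 / (2 * β ^ 2)) * G r) * g r = r := by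
    rw [hgG]
    rw [show Real.exp (-(1 / (2 * β ^ 2)) * G r) * (r * Real.exp (1 / (2 * β ^ 2) * G r))
      = r * Real.exp (-(1 / (2 * β ^ 2)) * G r + 1 / (2 * β ^ 2) * G r) by
        rw [Real.exp_add]; ring]
    rw [show -(1 / (2 * β ^ 2)) * G r + 1 / (2 * β ^ 2) * G r = 0 by ring, Real.exp_zero, mul_one]
  have hβ2 : β ^ 2 ≠ 0 := pow_ne_zero _ hβ
  have hkey : 2 * β ^ 2 * f'' r = -(γt r) * f' r - 2 * β ^ 2 * r := by
    have h1 : 2 * β ^ 2 * (1 / (2 * β ^ 2)) = 1 := by field_simp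
    rw [(hf'' r hr).unique hDf', hf'eq r]
    linear_combination (-(γt r * Real.exp (-(1 / (2 * β ^ 2)) * G r) *
      (δ - ∫ s in (0:ℝ)..r, g s))) * h1 - (2 * β ^ 2) * hexp_g
  -- nonnegativity facts
  have htail_nn : ∀ u, 0 ≤ u → 0 ≤ ∫ s in Ioi u, g s := fun u hu =>
    setIntegral_nonneg measurableSet_Ioi (fun s hs => hgnn s (hu.trans (le_of_lt hs)))
  have hf'nn : 0 ≤ f' r := by
    rw [hf']
    exact mul_nonneg (Real.exp_pos _).le (htail_nn r hr)
  have hδnn : 0 ≤ δ := by rw [hδ]; exact htail_nn 0 le_rfl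
  set S := sSup ((fun s => max (γ s) 0) '' Icc (0:ℝ) ε) with hS
  have hbdd : BddAbove ((fun s => max (γ s) 0) '' Icc (0:ℝ) ε) := by
    refine ⟨max (K₁ * ε) 0, ?_⟩
    rintro y ⟨s, hs, rfl⟩
    exact max_le_max (le_trans (hγle s hs.1) (by nlinarith [hs.2] : K₁ * s ≤ K₁ * ε)) le_rfl
  have hSnn : 0 ≤ S := by
    have h0 : max (γ 0) 0 ∈ (fun s => max (γ s) 0) '' Icc (0:ℝ) ε :=
      mem_image_of_mem _ (left_mem_Icc.2 hε.le)
    exact le_trans (le_max_right _ _) (le_csSup hbdd h0)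
  have hP := hπ r hr
  have hQ0 : 0 ≤ 1 - (π r)^2 := by nlinarith [hP.1, hP.2]
  have hQ1 : 1 - (π r)^2 ≤ 1 := by nlinarith [hP.1]
  have hKσε : 0 ≤ Kσ * ε := mul_nonneg hKσ.le hε.le
  -- main bound
  have hmain : f' r * γt r * (1 - (π r)^2) ≤ δ * (S + Kσ * ε) := by
    rcases le_or_gt ε r with hre | hre
    · have hπr : π r = 1 := hπ1 r hre
      rw [hπr]
      norm_num
      exact mul_nonneg hδnn (by linarith)
    · rcases le_or_gt (γt r) 0 with hγtr | hγtr
      · have h1 : f' r * γt r * (1 - (π r)^2) ≤ 0 :=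
          mul_nonpos_of_nonpos_of_nonneg (mul_nonpos_of_nonneg_of_nonpos hf'nn hγtr) hQ0
        exact le_trans h1 (mul_nonneg hδnn (by linarith))
      · have hGr : 0 ≤ G r :=
          intervalIntegral.integral_nonneg hr (fun u hu => hsign r hγtr u hu.1 hu.2)
        have hexple : Real.exp (-(1 / (2 * β ^ 2)) * G r) ≤ 1 := by
          rw [Real.exp_le_one_iff]
          nlinarith [mul_nonneg (le_of_lt (by positivity : (0:ℝ) < 1 / (2 * β ^ 2))) hGr]
        have hint0r : 0 ≤ ∫ s in (0:ℝ)..r, g s :=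
          intervalIntegral.integral_nonneg hr (fun u hu => hgnn u hu.1)
        have htle : (∫ s in Ioi r, g s) ≤ δ := by rw [hT r]; linarith
        have hf'le : f' r ≤ δ := by
          rw [hf']
          calc Real.exp (-(1 / (2 * β ^ 2)) * ∫ v in (0:ℝ)..r, γt v) * ∫ s in Ioi r, g s
              ≤ 1 * ∫ s in Ioi r, g s := mul_le_mul_of_nonneg_right hexple (htail_nn r hr)
            _ = ∫ s in Ioi r, g s := one_mul _
            _ ≤ δ := htle
        have hγtle : γt r ≤ S + Kσ * ε := by
          rw [hγt]
          have h1 : γ r ≤ max (γ r) 0 := le_max_left _ _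
          have h2 : max (γ r) 0 ≤ S := le_csSup hbdd (mem_image_of_mem _ ⟨hr, hre.le⟩)
          nlinarith [mul_le_mul_of_nonneg_left hre.le hKσ.le]
        have hstep1 : f' r * γt r * (1 - π r ^ 2) ≤ f' r * γt r :=
          mul_le_of_le_one_right (mul_nonneg hf'nn hγtr.le) hQ1
        have hstep2 : f' r * γt r ≤ δ * (S + Kσ * ε) :=
          mul_le_mul hf'le hγtle hγtr.le hδnn
        exact hstep1.trans hstep2
  have hrQ : 2 * β ^ 2 * r * (1 - (π r)^2) ≤ 2 * β ^ 2 * ε := by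
    rcases le_or_gt ε r with hre | hre
    · have hπr : π r = 1 := hπ1 r hre
      rw [hπr]
      nlinarith
    · nlinarith [hQ0, hQ1, hBpos, mul_nonneg hBpos.le hr]
  have h2b : 2 * β ^ 2 * f'' r * (π r)^2 = (-(γt r) * f' r - 2 * β ^ 2 * r) * (π r)^2 := by
    rw [show 2 * β ^ 2 * f'' r * (π r)^2 = (2 * β ^ 2 * f'' r) * (π r)^2 by ring, hkey]
  rw [hℓ]
  nlinarith [h2b, hmain, hrQ]
end

section
/- Let (Ω, 𝓕) be a measurable space, let μ and ν be probability measures on (Ω, 𝓕), and let c ≥ 0. If for every bounded measurable function f : Ω → ℝ with inf f > 0 one has ∫ log f dν ≤ log (∫ f dμ) + c, then Ent(ν | μ) ≤ c. -/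
open MeasureTheory Filter

lemma aux_log_trunc {t a b : ℝ} (ht : 0 < t) (ha : 0 < a) (hab : a ≤ b) :
    Real.log (min (max t a) b) = max (min (Real.log t) (Real.log b)) (Real.log a) := by
  have hb : 0 < b := ha.trans_le hab
  rcases le_total t a with h1 | h1
  · rw [max_eq_right h1, min_eq_left hab,
      min_eq_left ((Real.log_le_log ht h1).trans (Real.log_le_log ha hab)),
      max_eq_right (Real.log_le_log ht h1)]
  · rw [max_eq_left h1]
    rcases le_total t b with h2 | h2
    · rw [min_eq_left h2, min_eq_left (Real.log_le_log ht h2),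
        max_eq_left (Real.log_le_log ha h1)]
    · rw [min_eq_right h2, min_eq_right (Real.log_le_log hb h2),
        max_eq_left (Real.log_le_log ha hab)]

lemma aux_abs_trunc {L b : ℝ} (hb : 0 ≤ b) : |max (min L b) (-b)| ≤ |L| := by
  rw [abs_le]
  constructor
  · exact le_max_of_le_left (le_min (neg_abs_le L) ((neg_nonpos.2 (abs_nonneg L)).trans hb))
  · exact max_le ((min_le_left _ _).trans (le_abs_self _))
      ((neg_nonpos.2 hb).trans (abs_nonneg _))

/-- if probability measures `μ, ν` satisfy the log-Harnack-type inequality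
`∫ log f dν ≤ log(∫ f dμ) + c` for every bounded measurable `f` with positive infimum,
then `Ent(ν|μ) ≤ c`; that is, `ν ≪ μ` and `∫ log(dν/dμ) dν ≤ c`. -/
theorem stmt11 {Ω : Type*} [MeasurableSpace Ω] (μ ν : Measure Ω)
    [IsProbabilityMeasure μ] [IsProbabilityMeasure ν] (c : ℝ) (hc : 0 ≤ c)
    (h : ∀ f : Ω → ℝ, Measurable f → (∃ a : ℝ, 0 < a ∧ ∀ x, a ≤ f x) →
      (∃ M : ℝ, ∀ x, f x ≤ M) →
      ∫ x, Real.log (f x) ∂ν ≤ Real.log (∫ x, f x ∂μ) + c) :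
    ν ≪ μ ∧ ∫ x, llr ν μ x ∂ν ≤ c := by
  have hac : ν ≪ μ := by
    refine Measure.AbsolutelyContinuous.mk (fun A hA hμA => ?_)
    by_contra hνA
    have hpos : 0 < (ν A).toReal := ENNReal.toReal_pos hνA (measure_ne_top ν A)
    obtain ⟨n, hn⟩ := exists_nat_gt (Real.exp (c / (ν A).toReal))
    have hexp : c / (ν A).toReal < Real.log (n + 1) := by
      rw [← Real.log_exp (c / (ν A).toReal)]
      exact Real.log_lt_log (Real.exp_pos _) (hn.trans (lt_add_one _))
    set f : Ω → ℝ := fun x => A.indicator (fun _ => (n : ℝ)) x + 1 with hf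
    have hfmeas : Measurable f := (measurable_const.indicator hA).add measurable_const
    have hflb : ∀ x, (1:ℝ) ≤ f x := by
      intro x
      simp only [hf]
      have : (0:ℝ) ≤ A.indicator (fun _ => (n : ℝ)) x :=
        Set.indicator_nonneg (fun _ _ => Nat.cast_nonneg n) x
      linarith
    have hfub : ∀ x, f x ≤ (n:ℝ) + 1 := by
      intro x
      simp only [hf]
      have : A.indicator (fun _ => (n : ℝ)) x ≤ n :=
        Set.indicator_le_self' (fun _ _ => Nat.cast_nonneg n) x
      linarith
    have hh := h f hfmeas ⟨1, one_pos, hflb⟩ ⟨(n:ℝ) + 1, hfub⟩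
    have hμf : ∫ x, f x ∂μ = 1 := by
      rw [hf]
      rw [integral_add ((integrable_const ((n:ℝ))).indicator hA) (integrable_const 1)]
      rw [integral_indicator_const ((n:ℝ)) hA, measureReal_def, hμA]
      simp
    have hlogf : (fun x => Real.log (f x)) = A.indicator (fun _ => Real.log ((n:ℝ) + 1)) := by
      funext x
      by_cases hx : x ∈ A
      · simp [hf, Set.indicator_of_mem hx]
      · simp [hf, Set.indicator_of_notMem hx]
    rw [hμf, Real.log_one, zero_add, hlogf, integral_indicator_const _ hA, smul_eq_mul] at hh
    have : c < (ν A).toReal * Real.log ((n:ℝ) + 1) := by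
      rw [div_lt_iff₀ hpos] at hexp
      linarith [hexp]
    rw [measureReal_def] at hh
    linarith
  refine ⟨hac, ?_⟩
  by_cases hint : Integrable (llr ν μ) ν
  swap
  · rw [integral_undef hint]; exact hc
  have key : ∀ k : ℕ, 1 ≤ k →
      ∫ x, max (min (llr ν μ x) (Real.log k)) (-Real.log k) ∂ν ≤ c + (k:ℝ)⁻¹ := by
    intro k hk
    have hk0 : (0:ℝ) < k := by exact_mod_cast hk
    have hkinv : (0:ℝ) < (k:ℝ)⁻¹ := inv_pos.2 hk0
    have hik : ((k:ℝ)⁻¹) ≤ k := by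
      have h1 : (1:ℝ) ≤ k := by exact_mod_cast hk
      calc ((k:ℝ)⁻¹) ≤ 1 := inv_le_one_of_one_le₀ h1
        _ ≤ k := h1
    set g : Ω → ℝ := fun x => min (max ((ν.rnDeriv μ x).toReal) ((k:ℝ)⁻¹)) k with hg
    have hgmeas : Measurable g :=
      ((Measure.measurable_rnDeriv ν μ).ennreal_toReal.max measurable_const).min measurable_const
    have hglb : ∀ x, (k:ℝ)⁻¹ ≤ g x := fun x => le_min (le_max_right _ _) hik
    have hgub : ∀ x, g x ≤ k := fun x => min_le_right _ _
    have hh := h g hgmeas ⟨_, hkinv, hglb⟩ ⟨k, hgub⟩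
    have hgint : Integrable g μ := by
      refine ⟨hgmeas.aestronglyMeasurable, ?_⟩
      refine HasFiniteIntegral.mono' (g := fun _ => (k:ℝ)) (integrable_const _).2 ?_
      filter_upwards with x
      rw [Real.norm_eq_abs, abs_of_pos (hkinv.trans_le (hglb x))]
      exact hgub x
    have hrnint : Integrable (fun x => (ν.rnDeriv μ x).toReal) μ :=
      Measure.integrable_toReal_rnDeriv
    have h1 : ∫ x, g x ∂μ ≤ 1 + (k:ℝ)⁻¹ := by
      have hle : ∀ x, g x ≤ (ν.rnDeriv μ x).toReal + (k:ℝ)⁻¹ := fun x =>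
        (min_le_left _ _).trans (max_le (le_add_of_nonneg_right hkinv.le)
          (le_add_of_nonneg_left ENNReal.toReal_nonneg))
      calc ∫ x, g x ∂μ ≤ ∫ x, ((ν.rnDeriv μ x).toReal + (k:ℝ)⁻¹) ∂μ :=
            integral_mono hgint (hrnint.add (integrable_const _)) hle
        _ = 1 + (k:ℝ)⁻¹ := by
            rw [integral_add hrnint (integrable_const _), Measure.integral_toReal_rnDeriv hac]
            simp
    have hgpos : 0 < ∫ x, g x ∂μ := by
      calc (0:ℝ) < (k:ℝ)⁻¹ := hkinv
        _ = ∫ _x, (k:ℝ)⁻¹ ∂μ := by simp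
        _ ≤ ∫ x, g x ∂μ := integral_mono (integrable_const _) hgint hglb
    have hlog : Real.log (∫ x, g x ∂μ) ≤ (k:ℝ)⁻¹ := by
      calc Real.log (∫ x, g x ∂μ) ≤ Real.log (1 + (k:ℝ)⁻¹) := Real.log_le_log hgpos h1
        _ ≤ (1 + (k:ℝ)⁻¹) - 1 := Real.log_le_sub_one_of_pos (by positivity)
        _ = (k:ℝ)⁻¹ := by ring
    have hae : (fun x => Real.log (g x)) =ᵐ[ν]
        fun x => max (min (llr ν μ x) (Real.log k)) (-Real.log k) := by
      filter_upwards [Measure.rnDeriv_pos hac, hac.ae_le (Measure.rnDeriv_lt_top ν μ)]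
        with x hx hx2
      have ht : 0 < (ν.rnDeriv μ x).toReal := ENNReal.toReal_pos hx.ne' hx2.ne
      simp only [hg]
      rw [aux_log_trunc ht hkinv hik, Real.log_inv, llr_def]
    calc ∫ x, max (min (llr ν μ x) (Real.log k)) (-Real.log k) ∂ν
        = ∫ x, Real.log (g x) ∂ν := (integral_congr_ae hae).symm
      _ ≤ Real.log (∫ x, g x ∂μ) + c := hh
      _ ≤ (k:ℝ)⁻¹ + c := by linarith
      _ = c + (k:ℝ)⁻¹ := by ring
  have hbnonneg : ∀ k : ℕ, 0 ≤ Real.log k := by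
    intro k
    rcases Nat.eq_zero_or_pos k with hk | hk
    · simp [hk]
    · exact Real.log_nonneg (by exact_mod_cast hk)
  have hφ : Tendsto (fun k : ℕ => ∫ x, max (min (llr ν μ x) (Real.log k)) (-Real.log k) ∂ν)
      atTop (nhds (∫ x, llr ν μ x ∂ν)) := by
    refine tendsto_integral_of_dominated_convergence (fun x => |llr ν μ x|)
      (fun k => (((measurable_llr ν μ).min measurable_const).max
        measurable_const).aestronglyMeasurable) hint.abs ?_ ?_
    · intro k
      filter_upwards with x
      rw [Real.norm_eq_abs]
      exact aux_abs_trunc (hbnonneg k)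
    · filter_upwards with x
      have hlog : Tendsto (fun k : ℕ => Real.log k) atTop atTop :=
        Real.tendsto_log_atTop.comp tendsto_natCast_atTop_atTop
      refine tendsto_const_nhds.congr' ?_
      filter_upwards [hlog.eventually_ge_atTop (|llr ν μ x|)] with k hk
      rw [min_eq_left ((le_abs_self _).trans hk),
        max_eq_left (le_trans (neg_le_neg hk) (neg_abs_le _))]
  have hcb : Tendsto (fun k : ℕ => c + (k:ℝ)⁻¹) atTop (nhds c) := by
    have : Tendsto (fun k : ℕ => ((k:ℝ))⁻¹) atTop (nhds 0) :=
      tendsto_inv_atTop_zero.comp tendsto_natCast_atTop_atTop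
    simpa using tendsto_const_nhds.add this
  exact le_of_tendsto_of_tendsto hφ hcb (eventually_atTop.2 ⟨1, key⟩)
end

section
/- Let r₀ > 0, λ₀ > 0, β ≠ 0 and K₂ > K_σ > 0 be real constants, let φ : [0,∞) → [0,∞) satisfy φ(r) ≥ (2β²/(K₂ − K_σ)) r for all r ≥ 0, and let Z : [−r₀, ∞) → ℝ^d be continuous. Then for every s ≥ 0, e^{λ₀ s} ‖Z_s‖_{Γ^{r₀}} ≤ (1/2) e^{λ₀ r₀} (1/r₀) ∫_{−r₀}^0 |Z(u)| du + ((K₂ − K_σ)/(4β²)) e^{λ₀ r₀} (1/r₀) ∫_{max(s − r₀, 0)}^s e^{λ₀ v} φ(|Z(v)|) dv + ((K₂ − K_σ)/(4β²)) e^{λ₀ s} φ(|Z(s)|). -/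
open MeasureTheory Set

/-- for a continuous path `Z : [−r₀,∞) → ℝ^d`, a (continuous) function
`φ : [0,∞) → [0,∞)` with `φ(r) ≥ (2β²/(K₂ − K_σ)) r`, and constants `lam₀ > 0`, `r₀ > 0`,
`β ≠ 0`, `K₂ > K_σ > 0`, one has for every `s ≥ 0`:
`e^{lam₀ s} ‖Z_s‖_{Γ^{r₀}} ≤ (1/2) e^{lam₀ r₀} (1/r₀) ∫_{−r₀}^0 |Z(u)| du
  + ((K₂−K_σ)/(4β²)) e^{lam₀ r₀} (1/r₀) ∫_{max(s−r₀,0)}^s e^{lam₀ v} φ(|Z(v)|) dv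
  + ((K₂−K_σ)/(4β²)) e^{lam₀ s} φ(|Z(s)|)`,
where `‖Z_s‖_{Γ^{r₀}} = (1/2)|Z(s)| + (1/(2r₀)) ∫_{−r₀}^0 |Z(s+u)| du`. -/
theorem stmt13 (d : ℕ) (hd : 1 ≤ d) (r₀ lam₀ β Kσ K₂ : ℝ)
    (hr₀ : 0 < r₀) (hlam₀ : 0 < lam₀) (hβ : β ≠ 0) (hKσ : 0 < Kσ) (hK₂ : Kσ < K₂)
    (φ : ℝ → ℝ) (hφc : Continuous φ) (hφnn : ∀ r, 0 ≤ r → 0 ≤ φ r)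
    (hφ : ∀ r, 0 ≤ r → (2 * β ^ 2 / (K₂ - Kσ)) * r ≤ φ r)
    (Z : ℝ → EuclideanSpace ℝ (Fin d)) (hZ : ContinuousOn Z (Ici (-r₀))) :
    ∀ s : ℝ, 0 ≤ s →
      Real.exp (lam₀ * s) *
          ((1 / 2) * ‖Z s‖ + (1 / (2 * r₀)) * ∫ u in (-r₀)..(0 : ℝ), ‖Z (s + u)‖) ≤
        (1 / 2) * Real.exp (lam₀ * r₀) * (1 / r₀) * (∫ u in (-r₀)..(0 : ℝ), ‖Z u‖) +
        ((K₂ - Kσ) / (4 * β ^ 2)) * Real.exp (lam₀ * r₀) * (1 / r₀) *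
          (∫ v in (max (s - r₀) 0)..s, Real.exp (lam₀ * v) * φ ‖Z v‖) +
        ((K₂ - Kσ) / (4 * β ^ 2)) * Real.exp (lam₀ * s) * φ ‖Z s‖ := by
  intro s hs
  have hβ2 : (0:ℝ) < β ^ 2 := by positivity
  have hK : (0:ℝ) < K₂ - Kσ := by linarith
  set C : ℝ := (K₂ - Kσ) / (4 * β ^ 2) with hCdef
  have hC : 0 < C := by positivity
  -- key pointwise bound : r ≤ 2C φ(r)
  have hkey : ∀ r : ℝ, 0 ≤ r → r ≤ 2 * C * φ r := by
    intro r hr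
    have h2 : (2 * C) * ((2 * β ^ 2 / (K₂ - Kσ)) * r) ≤ (2 * C) * φ r :=
      mul_le_mul_of_nonneg_left (hφ r hr) (by positivity)
    have h3 : (2 * C) * ((2 * β ^ 2 / (K₂ - Kσ)) * r) = r := by
      rw [hCdef]; field_simp; ring
    rw [h3] at h2
    exact h2
  set m : ℝ := max (s - r₀) 0 with hmdef
  have hm0 : 0 ≤ m := le_max_right _ _
  have hms : m ≤ s := max_le (by linarith) hs
  have hmsr : s - r₀ ≤ m := le_max_left _ _
  have hZn : ContinuousOn (fun v => ‖Z v‖) (Ici (-r₀)) := hZ.norm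
  have hsub : ∀ a b : ℝ, -r₀ ≤ a → -r₀ ≤ b → uIcc a b ⊆ Ici (-r₀) := by
    intro a b ha hb x hx
    rcases le_total a b with h | h
    · rw [uIcc_of_le h] at hx; exact le_trans ha hx.1
    · rw [uIcc_of_ge h] at hx; exact le_trans hb hx.1
  have hint : ∀ a b : ℝ, -r₀ ≤ a → -r₀ ≤ b →
      IntervalIntegrable (fun v => ‖Z v‖) volume a b := fun a b ha hb =>
    (hZn.mono (hsub a b ha hb)).intervalIntegrable
  have hφZ : ContinuousOn (fun v => Real.exp (lam₀ * v) * φ ‖Z v‖) (Ici (-r₀)) :=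
    ((Real.continuous_exp.comp (continuous_const.mul continuous_id)).continuousOn).mul
      (hφc.comp_continuousOn hZn)
  have hintφ : ∀ a b : ℝ, -r₀ ≤ a → -r₀ ≤ b →
      IntervalIntegrable (fun v => Real.exp (lam₀ * v) * φ ‖Z v‖) volume a b :=
    fun a b ha hb => (hφZ.mono (hsub a b ha hb)).intervalIntegrable
  -- change of variables
  have hcv : (∫ u in (-r₀)..(0:ℝ), ‖Z (s + u)‖) = ∫ v in (s - r₀)..s, ‖Z v‖ := by
    have := intervalIntegral.integral_comp_add_left (a := -r₀) (b := (0:ℝ))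
      (fun v => ‖Z v‖) s
    simpa [sub_eq_add_neg] using this
  -- split the integral at m
  have hsplit : (∫ v in (s - r₀)..s, ‖Z v‖)
      = (∫ v in (s - r₀)..m, ‖Z v‖) + ∫ v in m..s, ‖Z v‖ := by
    rw [intervalIntegral.integral_add_adjacent_intervals
      (hint _ _ (by linarith) (by linarith)) (hint _ _ (by linarith) (by linarith))]
  set I₁ : ℝ := ∫ v in (s - r₀)..m, ‖Z v‖ with hI₁
  set I₂ : ℝ := ∫ v in m..s, ‖Z v‖ with hI₂
  set J : ℝ := ∫ v in m..s, Real.exp (lam₀ * v) * φ ‖Z v‖ with hJ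
  set I₀ : ℝ := ∫ u in (-r₀)..(0:ℝ), ‖Z u‖ with hI₀
  have hI₀nn : 0 ≤ I₀ :=
    intervalIntegral.integral_nonneg (by linarith) (fun u _ => norm_nonneg _)
  -- bound (ii)
  have hii : Real.exp (lam₀ * s) * I₁ ≤ Real.exp (lam₀ * r₀) * I₀ := by
    rcases le_total s r₀ with hsr | hsr
    · have hm : m = 0 := by rw [hmdef, max_eq_right]; linarith
      have hadj : (∫ v in (-r₀)..(s - r₀), ‖Z v‖) + (∫ v in (s - r₀)..(0:ℝ), ‖Z v‖)
          = ∫ v in (-r₀)..(0:ℝ), ‖Z v‖ :=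
        intervalIntegral.integral_add_adjacent_intervals
          (hint _ _ (by linarith) (by linarith)) (hint _ _ (by linarith) (by linarith))
      have hnn : 0 ≤ ∫ v in (-r₀)..(s - r₀), ‖Z v‖ :=
        intervalIntegral.integral_nonneg (by linarith) (fun u _ => norm_nonneg _)
      have hI1le : I₁ ≤ I₀ := by rw [hI₁, hm, hI₀]; linarith
      have hI1nn : 0 ≤ I₁ := by
        rw [hI₁, hm]
        exact intervalIntegral.integral_nonneg (by linarith) (fun u _ => norm_nonneg _)
      have hexp : Real.exp (lam₀ * s) ≤ Real.exp (lam₀ * r₀) :=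
        Real.exp_le_exp.2 (by nlinarith)
      calc Real.exp (lam₀ * s) * I₁ ≤ Real.exp (lam₀ * r₀) * I₁ :=
            mul_le_mul_of_nonneg_right hexp hI1nn
        _ ≤ Real.exp (lam₀ * r₀) * I₀ :=
            mul_le_mul_of_nonneg_left hI1le (Real.exp_pos _).le
    · have hm : m = s - r₀ := by rw [hmdef, max_eq_left]; linarith
      have h0 : I₁ = 0 := by rw [hI₁, hm, intervalIntegral.integral_same]
      rw [h0, mul_zero]
      positivity
  -- bound (iii)
  have hiii : Real.exp (lam₀ * s) * I₂ ≤ 2 * C * Real.exp (lam₀ * r₀) * J := by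
    have hint1 : IntervalIntegrable (fun v => Real.exp (lam₀ * s) * ‖Z v‖) volume m s :=
      (hint m s (by linarith) (by linarith)).const_mul _
    have hint2 : IntervalIntegrable
        (fun v => 2 * C * Real.exp (lam₀ * r₀) * (Real.exp (lam₀ * v) * φ ‖Z v‖))
        volume m s :=
      (hintφ m s (by linarith) (by linarith)).const_mul _
    have hmono : (∫ v in m..s, Real.exp (lam₀ * s) * ‖Z v‖)
        ≤ ∫ v in m..s, 2 * C * Real.exp (lam₀ * r₀) * (Real.exp (lam₀ * v) * φ ‖Z v‖) := by
      apply intervalIntegral.integral_mono_on hms hint1 hint2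
      intro v hv
      have hexp : Real.exp (lam₀ * s) ≤ Real.exp (lam₀ * r₀) * Real.exp (lam₀ * v) := by
        rw [← Real.exp_add]
        apply Real.exp_le_exp.2
        have : s ≤ r₀ + v := by
          have := hv.1
          have := le_max_left (s - r₀) 0
          linarith [hv.1, hmsr]
        nlinarith
      have hk := hkey ‖Z v‖ (norm_nonneg _)
      have hφnn' : 0 ≤ φ ‖Z v‖ := hφnn _ (norm_nonneg _)
      calc Real.exp (lam₀ * s) * ‖Z v‖
          ≤ (Real.exp (lam₀ * r₀) * Real.exp (lam₀ * v)) * (2 * C * φ ‖Z v‖) :=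
            mul_le_mul hexp hk (norm_nonneg _) (by positivity)
        _ = 2 * C * Real.exp (lam₀ * r₀) * (Real.exp (lam₀ * v) * φ ‖Z v‖) := by ring
    rwa [intervalIntegral.integral_const_mul, intervalIntegral.integral_const_mul,
      ← hI₂, ← hJ] at hmono
  -- bound (i)
  have hi : Real.exp (lam₀ * s) * ‖Z s‖ ≤ 2 * C * (Real.exp (lam₀ * s) * φ ‖Z s‖) := by
    have := mul_le_mul_of_nonneg_left (hkey ‖Z s‖ (norm_nonneg _)) (Real.exp_pos (lam₀ * s)).le
    linarith
  -- combine
  rw [hcv, hsplit]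
  have hL : Real.exp (lam₀ * s) * ((1/2) * ‖Z s‖ + (1/(2*r₀)) * (I₁ + I₂))
      = (1/2) * (Real.exp (lam₀ * s) * ‖Z s‖)
        + (1/(2*r₀)) * (Real.exp (lam₀ * s) * I₁)
        + (1/(2*r₀)) * (Real.exp (lam₀ * s) * I₂) := by ring
  rw [hL]
  have hA1 : (1/(2*r₀)) * (Real.exp (lam₀ * s) * I₁)
      ≤ (1/(2*r₀)) * (Real.exp (lam₀ * r₀) * I₀) :=
    mul_le_mul_of_nonneg_left hii (by positivity)
  have hA2 : (1/(2*r₀)) * (Real.exp (lam₀ * s) * I₂)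
      ≤ (1/(2*r₀)) * (2 * C * Real.exp (lam₀ * r₀) * J) :=
    mul_le_mul_of_nonneg_left hiii (by positivity)
  have he1 : (1/(2*r₀)) * (Real.exp (lam₀ * r₀) * I₀)
      = 1/2 * Real.exp (lam₀ * r₀) * (1/r₀) * I₀ := by
    field_simp
  have he2 : (1/(2*r₀)) * (2 * C * Real.exp (lam₀ * r₀) * J)
      = C * Real.exp (lam₀ * r₀) * (1/r₀) * J := by
    field_simp
  linarith
end

section
/- Let d, d₂ ≥ 1, and fix real constants K₁ ≥ 0, K_σ > 0, K₂ > K_σ, R > 0 and γ as below. Suppose b⁰ : ℝ^d → ℝ^d is continuous and satisfies ⟨x − y, b⁰(x) − b⁰(y)⟩ ≤ γ(|x − y|) |x − y| for all x, y ∈ ℝ^d, and σ : ℝ^d → ℝ^{d × d₂} satisfies (1/2) ‖σ(x) − σ(y)‖²_{HS} ≤ K_σ |x − y|² for all x, y ∈ ℝ^d. Then for every ε > 0 there exists a constant C₀ > 0 such that 2⟨x, b⁰(x)⟩ + ‖σ(x)‖²_{HS} ≤ C₀ − (2(K₂ − K_σ) − ε) |x|² for all x ∈ ℝ^d. -/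
open scoped RealInnerProductSpace
open Finset

/-- if `b⁰` is continuous and partially dissipative with rate `γ`, and `σ` has
Hilbert–Schmidt-Lipschitz constant `(1/2)‖σ(x)−σ(y)‖²_{HS} ≤ K_σ|x−y|²`, then for every
`ε > 0` there exists `C₀ > 0` with
`2⟨x, b⁰(x)⟩ + ‖σ(x)‖²_{HS} ≤ C₀ − (2(K₂ − K_σ) − ε)|x|²` for all `x`. -/
theorem stmt14 (d d₂ : ℕ) (hd : 1 ≤ d) (hd₂ : 1 ≤ d₂)
    (K₁ Kσ K₂ R : ℝ) (hK₁ : 0 ≤ K₁) (hKσ : 0 < Kσ) (hK₂ : Kσ < K₂) (hR : 0 < R)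
    (γ : ℝ → ℝ)
    (hγ : ∀ r, γ r = if r ≤ R then K₁ * r
      else if r ≤ 2 * R then (-((K₁ + K₂) / R) * (r - R) + K₁) * r
      else -K₂ * r)
    (b : EuclideanSpace ℝ (Fin d) → EuclideanSpace ℝ (Fin d)) (hbc : Continuous b)
    (hb : ∀ x y : EuclideanSpace ℝ (Fin d),
      ⟪x - y, b x - b y⟫ ≤ γ ‖x - y‖ * ‖x - y‖)
    (σ : EuclideanSpace ℝ (Fin d) → Matrix (Fin d) (Fin d₂) ℝ)
    (hσ : ∀ x y : EuclideanSpace ℝ (Fin d),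
      (1 / 2) * ∑ i, ∑ j, (σ x i j - σ y i j) ^ 2 ≤ Kσ * ‖x - y‖ ^ 2) :
    ∀ ε : ℝ, 0 < ε → ∃ C₀ : ℝ, 0 < C₀ ∧
      ∀ x : EuclideanSpace ℝ (Fin d),
        2 * ⟪x, b x⟫ + ∑ i, ∑ j, (σ x i j) ^ 2 ≤
          C₀ - (2 * (K₂ - Kσ) - ε) * ‖x‖ ^ 2 := by

  intro ε hε
  set B := ‖b 0‖ with hB
  have hB0 : 0 ≤ B := norm_nonneg _
  set S := ∑ i, ∑ j, (σ 0 i j) ^ 2 with hSdef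
  have hS : 0 ≤ S := by positivity
  set δ := ε / (4 * Kσ) with hδdef
  have hδ : 0 < δ := by positivity
  have hδKσ : δ * Kσ = ε / 4 := by
    field_simp [hδdef]
    rw [hδdef, div_mul_eq_mul_div, div_mul_eq_mul_div, div_eq_iff (by positivity)]; ring
  refine ⟨8 * (K₁ + K₂) * R ^ 2 + 2 * B ^ 2 / ε + (1 + 1 / δ) * S + 1, ?_, ?_⟩
  · have h1 : 0 ≤ 8 * (K₁ + K₂) * R ^ 2 := by nlinarith [sq_nonneg R]
    have h2 : 0 ≤ 2 * B ^ 2 / ε := by positivity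
    have h3 : 0 ≤ (1 + 1 / δ) * S := by positivity
    linarith
  · intro x
    set r := ‖x‖ with hr
    have hr0 : 0 ≤ r := norm_nonneg _
    have hK₂0 : 0 < K₂ := lt_trans hKσ hK₂
    -- bound on γ r * r
    have hγb : γ r * r ≤ (K₁ + K₂) * (2 * R) ^ 2 - K₂ * r ^ 2 := by
      rw [hγ r]
      split_ifs with h1 h2
      · have hrR : r ^ 2 ≤ R ^ 2 := by nlinarith
        nlinarith [mul_le_mul_of_nonneg_left hrR hK₁,
          mul_le_mul_of_nonneg_left hrR hK₂0.le, sq_nonneg R]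
      · have hfac : 0 ≤ (K₁ + K₂) / R * (r - R) := by
          apply mul_nonneg
          · apply div_nonneg (by linarith) hR.le
          · linarith
        have hr2 : r ^ 2 ≤ (2 * R) ^ 2 := by nlinarith
        have hfr2 : 0 ≤ ((K₁ + K₂) / R * (r - R)) * r ^ 2 :=
          mul_nonneg hfac (sq_nonneg r)
        nlinarith [mul_le_mul_of_nonneg_left hr2 hK₁,
          mul_le_mul_of_nonneg_left hr2 hK₂0.le]
      · nlinarith [sq_nonneg R]
    -- bound on inner product
    have hbx : ⟪x, b x⟫ ≤ γ r * r + B * r := by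
      have h1 := hb x 0
      simp only [sub_zero] at h1
      have h2 : ⟪x, b 0⟫ ≤ B * r := by
        calc ⟪x, b 0⟫ ≤ ‖x‖ * ‖b 0‖ := real_inner_le_norm x (b 0)
        _ = B * r := by rw [hB, hr]; ring
      have h3 : ⟪x, b x⟫ = ⟪x, b x - b 0⟫ + ⟪x, b 0⟫ := by
        rw [inner_sub_right]; ring
      rw [h3]
      linarith
    -- bound on σ sum
    have hσdiff : ∑ i, ∑ j, (σ x i j - σ 0 i j) ^ 2 ≤ 2 * Kσ * r ^ 2 := by
      have h1 := hσ x 0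
      simp only [sub_zero] at h1
      linarith
    have hσx : ∑ i, ∑ j, (σ x i j) ^ 2 ≤
        (1 + δ) * (∑ i, ∑ j, (σ x i j - σ 0 i j) ^ 2) + (1 + 1 / δ) * S := by
      rw [hSdef, Finset.mul_sum, Finset.mul_sum]
      rw [← Finset.sum_add_distrib]
      apply Finset.sum_le_sum
      intro i _
      rw [Finset.mul_sum, Finset.mul_sum, ← Finset.sum_add_distrib]
      apply Finset.sum_le_sum
      intro j _
      set a := σ x i j
      set c := σ 0 i j
      have hδne : δ ≠ 0 := ne_of_gt hδ
      have key2 : 0 ≤ δ * (a - c) ^ 2 - 2 * (a - c) * c + 1 / δ * c ^ 2 := by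
        have : δ * (a - c) ^ 2 - 2 * (a - c) * c + 1 / δ * c ^ 2 =
            δ * (a - c - c / δ) ^ 2 := by field_simp; ring
        rw [this]; positivity
      have hid : a ^ 2 = (a - c) ^ 2 + 2 * (a - c) * c + c ^ 2 := by ring
      have hexpand : (1 + δ) * (a - c) ^ 2 + (1 + 1 / δ) * c ^ 2 =
          (a - c) ^ 2 + c ^ 2 + (δ * (a - c) ^ 2 + 1 / δ * c ^ 2) := by ring
      linarith
    -- AM-GM for B * r
    have hBr : 2 * (B * r) ≤ ε / 2 * r ^ 2 + 2 * B ^ 2 / ε := by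
      have h := sq_nonneg (ε * r - 2 * B)
      have hident : ε / 2 * r ^ 2 + 2 * B ^ 2 / ε - 2 * (B * r) =
          (ε * r - 2 * B) ^ 2 / (2 * ε) := by
        field_simp; ring
      have hpos : 0 ≤ (ε * r - 2 * B) ^ 2 / (2 * ε) := by positivity
      linarith
    have hexp : (1 + δ) * (2 * Kσ * r ^ 2) = 2 * Kσ * r ^ 2 + ε / 2 * r ^ 2 := by
      linear_combination 2 * r ^ 2 * hδKσ
    have hmono : (1 + δ) * (∑ i, ∑ j, (σ x i j - σ 0 i j) ^ 2) ≤
        (1 + δ) * (2 * Kσ * r ^ 2) := by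
      apply mul_le_mul_of_nonneg_left hσdiff
      linarith
    have hRid : 2 * ((K₁ + K₂) * (2 * R) ^ 2) = 8 * (K₁ + K₂) * R ^ 2 := by ring
    have hGid : (2 * (K₂ - Kσ) - ε) * r ^ 2 =
        2 * (K₂ * r ^ 2) - 2 * (2 * Kσ * r ^ 2) / 2 - ε * r ^ 2 := by ring
    linarith [hγb, hbx, hσx, hBr, hmono, hexp]
end
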